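/- arXiv:1205.6844 — 5 statements merged into one kernel-verified Lean document; each statement's English description precedes it below -/
import Mathlib

section
/- Let 0 ≤ σ₂ < σ₁ and suppose that the regular solutions satisfy v_{σ₁}(ζ) > 0 and v_{σ₂}(ζ) > 0 for all ζ ≥ 0. Then v_{σ₁}(ζ) < v_{σ₂}(ζ) for every ζ > 0. -/
open Filter Set

/-- A regular solution of the singular ODE
`-ζ·v'' - v'/(m-2) + B·ζ^{m/(m-2)}·v = σ·v` on `(0,∞)`:
continuously differentiable on `[0,∞)`, twice continuously differentiable on
`(0,∞)`, and normalized by `v 0 = 1`. -/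
def RegSol (m B σ : ℝ) (v : ℝ → ℝ) : Prop :=
  ContDiffOn ℝ 1 v (Set.Ici 0) ∧
  ContDiffOn ℝ 2 v (Set.Ioi 0) ∧
  (∀ ζ : ℝ, 0 < ζ →
    -ζ * deriv (deriv v) ζ - deriv v ζ / (m - 2)
      + B * ζ ^ (m / (m - 2)) * v ζ = σ * v ζ) ∧
  v 0 = 1
theorem stmt11 (m B σ₁ σ₂ : ℝ) (hm : 3 < m) (hB : 0 < B)
    (hσ₂ : 0 ≤ σ₂) (hσ : σ₂ < σ₁) (v₁ v₂ : ℝ → ℝ)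
    (h₁ : RegSol m B σ₁ v₁) (h₂ : RegSol m B σ₂ v₂)
    (hp₁ : ∀ ζ : ℝ, 0 ≤ ζ → 0 < v₁ ζ) (hp₂ : ∀ ζ : ℝ, 0 ≤ ζ → 0 < v₂ ζ) :
    ∀ ζ : ℝ, 0 < ζ → v₁ ζ < v₂ ζ := by
  have hm2 : (1:ℝ) < m - 2 := by linarith
  set α : ℝ := 1 / (m - 2) with hαdef
  have hα : 0 < α := by positivity
  -- first derivatives as HasDerivAt at points > 0
  have hd1 : ∀ ζ : ℝ, 0 < ζ → HasDerivAt v₁ (deriv v₁ ζ) ζ := fun ζ hζ =>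
    (((h₁.2.1.differentiableOn two_ne_zero).differentiableAt
      (Ioi_mem_nhds hζ)).hasDerivAt)
  have hd2 : ∀ ζ : ℝ, 0 < ζ → HasDerivAt v₂ (deriv v₂ ζ) ζ := fun ζ hζ =>
    (((h₂.2.1.differentiableOn two_ne_zero).differentiableAt
      (Ioi_mem_nhds hζ)).hasDerivAt)
  have hdd1 : ∀ ζ : ℝ, 0 < ζ → HasDerivAt (deriv v₁) (deriv (deriv v₁) ζ) ζ := by
    intro ζ hζ
    have := (h₁.2.1.deriv_of_isOpen isOpen_Ioi (le_refl 2)).differentiableOn one_ne_zero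
    exact (this.differentiableAt (Ioi_mem_nhds hζ)).hasDerivAt
  have hdd2 : ∀ ζ : ℝ, 0 < ζ → HasDerivAt (deriv v₂) (deriv (deriv v₂) ζ) ζ := by
    intro ζ hζ
    have := (h₂.2.1.deriv_of_isOpen isOpen_Ioi (le_refl 2)).differentiableOn one_ne_zero
    exact (this.differentiableAt (Ioi_mem_nhds hζ)).hasDerivAt
  -- the Wronskian-like function
  set W : ℝ → ℝ := fun ζ => ζ ^ α *
    (derivWithin v₁ (Ici 0) ζ * v₂ ζ - derivWithin v₂ (Ici 0) ζ * v₁ ζ) with hWdef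
  have hW0 : W 0 = 0 := by
    simp [hWdef, Real.zero_rpow (ne_of_gt hα)]
  have hdw1 : ∀ ζ : ℝ, 0 < ζ → derivWithin v₁ (Ici (0:ℝ)) ζ = deriv v₁ ζ := fun ζ hζ =>
    derivWithin_of_mem_nhds (Ici_mem_nhds hζ)
  have hdw2 : ∀ ζ : ℝ, 0 < ζ → derivWithin v₂ (Ici (0:ℝ)) ζ = deriv v₂ ζ := fun ζ hζ =>
    derivWithin_of_mem_nhds (Ici_mem_nhds hζ)
  -- continuity of W on Ici 0
  have hcont1 : ContinuousOn v₁ (Ici (0:ℝ)) := h₁.1.continuousOn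
  have hcont2 : ContinuousOn v₂ (Ici (0:ℝ)) := h₂.1.continuousOn
  have hWcont : ContinuousOn W (Ici (0:ℝ)) := by
    apply ContinuousOn.mul
    · exact continuousOn_id.rpow_const fun x _ => Or.inr hα.le
    · exact ((h₁.1.continuousOn_derivWithin (uniqueDiffOn_Ici 0) le_rfl).mul hcont2).sub
        ((h₂.1.continuousOn_derivWithin (uniqueDiffOn_Ici 0) le_rfl).mul hcont1)
  -- derivative of W on Ioi 0
  have hWderiv : ∀ ζ : ℝ, 0 < ζ →
      HasDerivAt W (ζ ^ (α - 1) * ((σ₂ - σ₁) * (v₁ ζ * v₂ ζ))) ζ := by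
    intro ζ hζ
    have hp : HasDerivAt (fun x : ℝ => x ^ α) (α * ζ ^ (α - 1)) ζ :=
      Real.hasDerivAt_rpow_const (Or.inl (ne_of_gt hζ))
    have hu : HasDerivAt (fun x => deriv v₁ x * v₂ x - deriv v₂ x * v₁ x)
        (deriv (deriv v₁) ζ * v₂ ζ + deriv v₁ ζ * deriv v₂ ζ -
          (deriv (deriv v₂) ζ * v₁ ζ + deriv v₂ ζ * deriv v₁ ζ)) ζ :=
      ((hdd1 ζ hζ).mul (hd2 ζ hζ)).sub ((hdd2 ζ hζ).mul (hd1 ζ hζ))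
    have hWeq : W =ᶠ[nhds ζ]
        fun x => x ^ α * (deriv v₁ x * v₂ x - deriv v₂ x * v₁ x) := by
      filter_upwards [Ioi_mem_nhds hζ] with x hx
      simp [hWdef, hdw1 x hx, hdw2 x hx]
    have h' := (hp.mul hu)
    have key : α * ζ ^ (α - 1) * (deriv v₁ ζ * v₂ ζ - deriv v₂ ζ * v₁ ζ) +
        ζ ^ α * (deriv (deriv v₁) ζ * v₂ ζ + deriv v₁ ζ * deriv v₂ ζ -
          (deriv (deriv v₂) ζ * v₁ ζ + deriv v₂ ζ * deriv v₁ ζ)) =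
        ζ ^ (α - 1) * ((σ₂ - σ₁) * (v₁ ζ * v₂ ζ)) := by
      have e₁ := h₁.2.2.1 ζ hζ
      have e₂ := h₂.2.2.1 ζ hζ
      have hsplit : ζ ^ α = ζ ^ (α - 1) * ζ := by
        rw [Real.rpow_sub_one (ne_of_gt hζ)]
        field_simp
      rw [hsplit, hαdef]
      linear_combination (-(ζ ^ (α - 1) * v₂ ζ)) * e₁ + (ζ ^ (α - 1) * v₁ ζ) * e₂
    exact (key ▸ h').congr_of_eventuallyEq hWeq
  -- W is strictly antitone on Ici 0
  have hWanti : StrictAntiOn W (Ici (0:ℝ)) := by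
    apply strictAntiOn_of_deriv_neg (convex_Ici 0) hWcont
    intro ζ hζ
    rw [interior_Ici] at hζ
    rw [(hWderiv ζ hζ).deriv]
    have h1 : (0:ℝ) < ζ ^ (α - 1) := Real.rpow_pos_of_pos hζ _
    have h2 : (0:ℝ) < v₁ ζ * v₂ ζ := mul_pos (hp₁ ζ hζ.le) (hp₂ ζ hζ.le)
    exact mul_neg_of_pos_of_neg h1 (mul_neg_of_neg_of_pos (by linarith) h2)
  have hWneg : ∀ ζ : ℝ, 0 < ζ → deriv v₁ ζ * v₂ ζ - deriv v₂ ζ * v₁ ζ < 0 := by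
    intro ζ hζ
    have := hWanti (self_mem_Ici) (le_of_lt hζ) hζ
    rw [hW0] at this
    have hz : (0:ℝ) < ζ ^ α := Real.rpow_pos_of_pos hζ _
    have : ζ ^ α * (derivWithin v₁ (Ici 0) ζ * v₂ ζ - derivWithin v₂ (Ici 0) ζ * v₁ ζ) < 0 := this
    rw [hdw1 ζ hζ, hdw2 ζ hζ] at this
    nlinarith
  -- the ratio function
  set G : ℝ → ℝ := fun ζ => v₁ ζ / v₂ ζ with hGdef
  have hGcont : ContinuousOn G (Ici (0:ℝ)) :=
    hcont1.div hcont2 fun x hx => (hp₂ x hx).ne'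
  have hGanti : StrictAntiOn G (Ici (0:ℝ)) := by
    apply strictAntiOn_of_deriv_neg (convex_Ici 0) hGcont
    intro ζ hζ
    rw [interior_Ici] at hζ
    have hG' : HasDerivAt G
        ((deriv v₁ ζ * v₂ ζ - v₁ ζ * deriv v₂ ζ) / (v₂ ζ) ^ 2) ζ :=
      (hd1 ζ hζ).div (hd2 ζ hζ) (hp₂ ζ hζ.le).ne'
    rw [hG'.deriv]
    have := hWneg ζ hζ
    have hv2 : (0:ℝ) < (v₂ ζ) ^ 2 := pow_pos (hp₂ ζ hζ.le) 2
    apply div_neg_of_neg_of_pos _ hv2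
    nlinarith
  intro ζ hζ
  have := hGanti self_mem_Ici hζ.le hζ
  rw [hGdef] at this
  simp only at this
  rw [h₁.2.2.2, h₂.2.2.2] at this
  norm_num at this
  rw [div_lt_one (hp₂ ζ hζ.le)] at this
  exact this
end

section
/- There is at most one σ ≥ 0 such that the regular solution v_σ satisfies v_σ(ζ) > 0 for all ζ ≥ 0 and v_σ(ζ) → 0 as ζ → +∞. -/
open Filter Set

lemma hd1 {v : ℝ → ℝ} (hv2 : ContDiffOn ℝ 2 v (Set.Ioi 0)) {ζ : ℝ} (hζ : 0 < ζ) :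
    HasDerivAt v (deriv v ζ) ζ :=
  ((hv2.differentiableOn (by norm_num)).differentiableAt (isOpen_Ioi.mem_nhds hζ)).hasDerivAt

lemma hd2 {v : ℝ → ℝ} (hv2 : ContDiffOn ℝ 2 v (Set.Ioi 0)) {ζ : ℝ} (hζ : 0 < ζ) :
    HasDerivAt (deriv v) (deriv (deriv v) ζ) ζ := by
  have h : ContDiffOn ℝ 1 (deriv v) (Set.Ioi 0) :=
    hv2.deriv_of_isOpen isOpen_Ioi (by norm_num)
  exact ((h.differentiableOn (by norm_num)).differentiableAt (isOpen_Ioi.mem_nhds hζ)).hasDerivAt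

lemma hgderiv {m B σ : ℝ} (hm : 3 < m) {v : ℝ → ℝ}
    (hv2 : ContDiffOn ℝ 2 v (Set.Ioi 0))
    (hode : ∀ ζ : ℝ, 0 < ζ →
      -ζ * deriv (deriv v) ζ - deriv v ζ / (m - 2)
        + B * ζ ^ (m / (m - 2)) * v ζ = σ * v ζ)
    {ζ : ℝ} (hζ : 0 < ζ) :
    HasDerivAt (fun t => t ^ (m-2)⁻¹ * deriv v t)
      (ζ ^ ((m-2)⁻¹ - 1) * ((B * ζ ^ (m / (m - 2)) - σ) * v ζ)) ζ := by
  have h1 : HasDerivAt (fun t : ℝ => t ^ (m-2)⁻¹) ((m-2)⁻¹ * ζ ^ ((m-2)⁻¹ - 1)) ζ :=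
    Real.hasDerivAt_rpow_const (Or.inl hζ.ne')
  have h2 : HasDerivAt (fun t => t ^ (m-2)⁻¹ * deriv v t) _ ζ := (h1.mul (hd2 hv2 hζ))
  convert h2 using 1
  have hp : ζ ^ (m-2)⁻¹ = ζ ^ ((m-2)⁻¹ - 1) * ζ := by
    rw [← Real.rpow_add_one hζ.ne']; ring_nf
  have h3 := hode ζ hζ
  rw [hp]
  linear_combination (ζ ^ ((m-2)⁻¹ - 1)) * h3

/-- Monotonicity of `g = ζ^p v'` beyond `Z`, and negativity of `v'` there. -/
lemma claimA {m B σ : ℝ} (hm : 3 < m) {v : ℝ → ℝ}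
    (hv2 : ContDiffOn ℝ 2 v (Set.Ioi 0))
    (hode : ∀ ζ : ℝ, 0 < ζ →
      -ζ * deriv (deriv v) ζ - deriv v ζ / (m - 2)
        + B * ζ ^ (m / (m - 2)) * v ζ = σ * v ζ)
    (hvpos : ∀ ζ : ℝ, 0 ≤ ζ → 0 < v ζ)
    (hvlim : Filter.Tendsto v Filter.atTop (nhds 0))
    {Z : ℝ} (hZ1 : 1 ≤ Z)
    (hZb : ∀ ζ : ℝ, Z ≤ ζ → σ < B * ζ ^ (m / (m - 2))) :
    StrictMonoOn (fun t => t ^ (m-2)⁻¹ * deriv v t) (Set.Ici Z) ∧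
      ∀ ζ : ℝ, Z ≤ ζ → deriv v ζ < 0 := by
  set p : ℝ := (m-2)⁻¹ with hpdef
  have hppos : 0 < p := by
    have : (0:ℝ) < m - 2 := by linarith
    rw [hpdef]; positivity
  have hp1 : p < 1 := by
    rw [hpdef]
    rw [inv_lt_one_iff₀]
    right; linarith
  have hZpos : (0:ℝ) < Z := lt_of_lt_of_le one_pos hZ1
  set g : ℝ → ℝ := fun t => t ^ p * deriv v t with hgdef
  -- continuity of g on Ici Z
  have hgcont : ContinuousOn g (Set.Ici Z) := by
    apply ContinuousOn.mul
    · exact (continuousOn_id.rpow_const fun x hx =>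
        Or.inl (ne_of_gt (lt_of_lt_of_le hZpos hx)))
    · exact (hv2.continuousOn_deriv_of_isOpen isOpen_Ioi (by norm_num)).mono
        fun x hx => lt_of_lt_of_le hZpos hx
  have hgmono : StrictMonoOn g (Set.Ici Z) := by
    apply strictMonoOn_of_deriv_pos (convex_Ici Z) hgcont
    intro x hx
    rw [interior_Ici] at hx
    have hx0 : (0:ℝ) < x := lt_trans hZpos hx
    rw [(hgderiv hm hv2 hode hx0).deriv]
    have h1 : (0:ℝ) < x ^ (p - 1) := Real.rpow_pos_of_pos hx0 _
    have h2 : σ < B * x ^ (m / (m - 2)) := hZb x hx.le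
    have h3 : 0 < v x := hvpos x hx0.le
    have h4 : 0 < B * x ^ (m / (m - 2)) - σ := sub_pos.mpr h2
    positivity
  refine ⟨hgmono, ?_⟩
  by_contra hcon
  push_neg at hcon
  obtain ⟨ζ₀, hζ₀Z, hζ₀⟩ := hcon
  have hζ₀pos : (0:ℝ) < ζ₀ := lt_of_lt_of_le hZpos hζ₀Z
  have hg0 : 0 ≤ g ζ₀ := mul_nonneg (Real.rpow_pos_of_pos hζ₀pos _).le hζ₀
  set c : ℝ := g (ζ₀ + 1) with hcdef
  have hc : 0 < c := lt_of_le_of_lt hg0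
    (hgmono (mem_Ici.mpr hζ₀Z) (mem_Ici.mpr (by linarith)) (by linarith))
  -- lower bound on v' for ζ ≥ ζ₀+1
  have hlow : ∀ ζ : ℝ, ζ₀ + 1 ≤ ζ → c / ζ ≤ deriv v ζ := by
    intro ζ hζ
    have hζ1 : (1:ℝ) ≤ ζ := by linarith
    have hζpos : (0:ℝ) < ζ := by linarith
    have h1 : c ≤ g ζ := by
      rcases eq_or_lt_of_le hζ with h | h
      · rw [← h]
      · exact (hgmono (mem_Ici.mpr (by linarith)) (mem_Ici.mpr (by linarith)) h).le
    have hrp : (0:ℝ) < ζ ^ p := Real.rpow_pos_of_pos hζpos _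
    have h2 : c / ζ ^ p ≤ deriv v ζ := by
      rw [div_le_iff₀ hrp]
      calc c ≤ ζ ^ p * deriv v ζ := h1
        _ = deriv v ζ * ζ ^ p := by ring
    refine le_trans ?_ h2
    apply div_le_div_of_nonneg_left hc.le hrp
    calc ζ ^ p ≤ ζ ^ (1:ℝ) := Real.rpow_le_rpow_of_exponent_le hζ1 hp1.le
      _ = ζ := Real.rpow_one ζ
  -- v - c log is monotone on [ζ₀+1, ∞)
  set h : ℝ → ℝ := fun t => v t - c * Real.log t with hhdef
  have hhmono : MonotoneOn h (Set.Ici (ζ₀ + 1)) := by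
    have hd : ∀ x : ℝ, 0 < x → HasDerivAt h (deriv v x - c * x⁻¹) x := by
      intro x hx
      exact (hd1 hv2 hx).sub ((Real.hasDerivAt_log hx.ne').const_mul c)
    apply monotoneOn_of_deriv_nonneg (convex_Ici _)
    · intro x hx
      have hx0 : (0:ℝ) < x := by
        have := hx.out; linarith
      exact ((hd x hx0).continuousAt.continuousWithinAt)
    · intro x hx
      rw [interior_Ici] at hx
      have hx0 : (0:ℝ) < x := by linarith [hx.out]
      exact ((hd x hx0).differentiableAt).differentiableWithinAt
    · intro x hx
      rw [interior_Ici] at hx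
      have hx0 : (0:ℝ) < x := by linarith [hx.out]
      rw [(hd x hx0).deriv]
      have := hlow x hx.out.le
      rw [div_eq_mul_inv] at this
      linarith
  -- hence v tends to infinity: contradiction
  have hvbig : ∀ ζ : ℝ, ζ₀ + 1 ≤ ζ → c * Real.log ζ + h (ζ₀ + 1) ≤ v ζ := by
    intro ζ hζ
    have := hhmono (self_mem_Ici) (mem_Ici.mpr hζ) hζ
    simp only [hhdef] at this ⊢
    linarith
  have htop : Filter.Tendsto (fun ζ : ℝ => c * Real.log ζ + h (ζ₀ + 1))
      Filter.atTop Filter.atTop :=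
    (Real.tendsto_log_atTop.const_mul_atTop hc).atTop_add tendsto_const_nhds
  have : Filter.Tendsto v Filter.atTop Filter.atTop :=
    tendsto_atTop_mono' _ ((eventually_ge_atTop (ζ₀ + 1)).mono fun ζ hζ => hvbig ζ hζ) htop
  exact not_tendsto_atTop_of_tendsto_nhds hvlim this

lemma key {m B σ σ' : ℝ} (hm : 3 < m) (hB : 0 < B) (hσ : σ < σ')
    {v w : ℝ → ℝ} (hv : RegSol m B σ v) (hw : RegSol m B σ' w)
    (hvpos : ∀ ζ : ℝ, 0 ≤ ζ → 0 < v ζ) (hwpos : ∀ ζ : ℝ, 0 ≤ ζ → 0 < w ζ)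
    (hvlim : Filter.Tendsto v Filter.atTop (nhds 0))
    (hwlim : Filter.Tendsto w Filter.atTop (nhds 0)) : False := by
  obtain ⟨hv1, hv2, hvode, -⟩ := hv
  obtain ⟨hw1, hw2, hwode, -⟩ := hw
  set p : ℝ := (m-2)⁻¹ with hpdef
  have hm2 : (0:ℝ) < m - 2 := by linarith
  have hppos : 0 < p := by rw [hpdef]; positivity
  have hq : 0 < m / (m - 2) := by positivity
  -- find Z beyond which B ζ^q > σ'
  have htop : Filter.Tendsto (fun ζ : ℝ => B * ζ ^ (m / (m - 2)))
      Filter.atTop Filter.atTop := (tendsto_rpow_atTop hq).const_mul_atTop hB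
  obtain ⟨Z₀, hZ₀⟩ := Filter.eventually_atTop.mp (htop.eventually_gt_atTop σ')
  set Z : ℝ := max Z₀ 1 with hZdef
  have hZ1 : 1 ≤ Z := le_max_right _ _
  have hZpos : (0:ℝ) < Z := lt_of_lt_of_le one_pos hZ1
  have hZb' : ∀ ζ : ℝ, Z ≤ ζ → σ' < B * ζ ^ (m / (m - 2)) :=
    fun ζ hζ => hZ₀ ζ (le_trans (le_max_left _ _) hζ)
  obtain ⟨hvmono, hvneg⟩ := claimA hm hv2 hvode hvpos hvlim hZ1
    (fun ζ hζ => lt_trans hσ (hZb' ζ hζ))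
  obtain ⟨hwmono, hwneg⟩ := claimA hm hw2 hwode hwpos hwlim hZ1 hZb'
  set W : ℝ → ℝ := fun t =>
    v t * (t ^ p * deriv w t) - w t * (t ^ p * deriv v t) with hWdef
  have hWd : ∀ ζ : ℝ, 0 < ζ →
      HasDerivAt W ((σ - σ') * (ζ ^ (p - 1) * (v ζ * w ζ))) ζ := by
    intro ζ hζ
    have A := (hd1 hv2 hζ).mul (hgderiv hm hw2 hwode hζ)
    have A' := (hd1 hw2 hζ).mul (hgderiv hm hv2 hvode hζ)
    have h : HasDerivAt W _ ζ := A.sub A'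
    convert h using 1
    ring
  have hWcont : ContinuousOn W (Set.Ioi 0) :=
    fun x hx => ((hWd x hx).continuousAt).continuousWithinAt
  have hWanti : StrictAntiOn W (Set.Ioi 0) := by
    apply strictAntiOn_of_deriv_neg (convex_Ioi 0) hWcont
    intro x hx
    rw [interior_Ioi] at hx
    rw [(hWd x hx).deriv]
    have h1 : (0:ℝ) < x ^ (p - 1) := Real.rpow_pos_of_pos hx _
    have h2 : 0 < v x := hvpos x hx.le
    have h3 : 0 < w x := hwpos x hx.le
    have h4 : σ - σ' < 0 := by linarith
    exact mul_neg_of_neg_of_pos h4 (by positivity)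
  -- W tends to 0 at 0+
  have hW0 : Filter.Tendsto W (nhdsWithin 0 (Set.Ioi 0)) (nhds 0) := by
    have hrp : Filter.Tendsto (fun t : ℝ => t ^ p) (nhdsWithin 0 (Set.Ioi 0)) (nhds 0) := by
      have h := (Real.continuousAt_rpow_const 0 p (Or.inr hppos.le)).tendsto
      rw [Real.zero_rpow hppos.ne'] at h
      exact h.mono_left nhdsWithin_le_nhds
    have c1 : ContinuousWithinAt v (Set.Ici 0) 0 := hv1.continuousOn 0 self_mem_Ici
    have c2 : ContinuousWithinAt (derivWithin w (Set.Ici 0)) (Set.Ici 0) 0 :=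
      (hw1.continuousOn_derivWithin (uniqueDiffOn_Ici 0) le_rfl) 0 self_mem_Ici
    have c3 : ContinuousWithinAt w (Set.Ici 0) 0 := hw1.continuousOn 0 self_mem_Ici
    have c4 : ContinuousWithinAt (derivWithin v (Set.Ici 0)) (Set.Ici 0) 0 :=
      (hv1.continuousOn_derivWithin (uniqueDiffOn_Ici 0) le_rfl) 0 self_mem_Ici
    have hbr := ((c1.mul c2).sub (c3.mul c4)).tendsto.mono_left
      (nhdsWithin_mono 0 Ioi_subset_Ici_self)
    have hF := hrp.mul hbr
    rw [zero_mul] at hF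
    apply hF.congr'
    filter_upwards [self_mem_nhdsWithin] with t ht
    have ht0 : (0:ℝ) < t := ht
    have hmem : Set.Ici (0:ℝ) ∈ nhds t :=
      Filter.mem_of_superset (isOpen_Ioi.mem_nhds ht0) Ioi_subset_Ici_self
    show t ^ p * (v t * derivWithin w (Set.Ici 0) t - w t * derivWithin v (Set.Ici 0) t) = W t
    rw [derivWithin_of_mem_nhds hmem, derivWithin_of_mem_nhds hmem]
    show t ^ p * (v t * deriv w t - w t * deriv v t) = W t
    rw [hWdef]; ring
  -- W is negative on (0,∞)
  have hWneg : ∀ ζ : ℝ, 0 < ζ → W ζ < 0 := by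
    intro ζ hζ
    have h1 : W ζ < W (ζ/2) :=
      hWanti (mem_Ioi.mpr (half_pos hζ)) (mem_Ioi.mpr hζ) (half_lt_self hζ)
    have h2 : W (ζ/2) ≤ 0 := by
      refine ge_of_tendsto hW0 ?_
      filter_upwards [Ioo_mem_nhdsGT_of_mem
        (⟨le_refl (0:ℝ), half_pos hζ⟩ : (0:ℝ) ∈ Set.Ico 0 (ζ/2))] with ε hε
      exact (hWanti (mem_Ioi.mpr hε.1) (mem_Ioi.mpr (half_pos hζ)) hε.2).le
    exact lt_of_lt_of_le h1 h2
  -- final contradiction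
  set Cw : ℝ := -(Z ^ p * deriv w Z) with hCwdef
  have hCw : 0 < Cw := by
    have h1 : (0:ℝ) < Z ^ p := Real.rpow_pos_of_pos hZpos _
    have h2 := hwneg Z le_rfl
    rw [hCwdef]; nlinarith
  have hδ : 0 < -W (Z+1) := by
    have := hWneg (Z+1) (by linarith); linarith
  have hbound : ∀ ζ : ℝ, Z + 1 ≤ ζ → -W (Z+1) ≤ v ζ * Cw := by
    intro ζ hζ
    have hζZ : Z ≤ ζ := by linarith
    have hζpos : (0:ℝ) < ζ := by linarith
    have hgw : Z ^ p * deriv w Z ≤ ζ ^ p * deriv w ζ := by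
      rcases eq_or_lt_of_le hζZ with h | h
      · rw [h]
      · exact (hwmono (mem_Ici.mpr le_rfl) (mem_Ici.mpr hζZ) h).le
    have h1 : W ζ ≤ W (Z+1) := by
      rcases eq_or_lt_of_le hζ with h | h
      · rw [← h]
      · exact (hWanti (mem_Ioi.mpr (by linarith)) (mem_Ioi.mpr hζpos) h).le
    have e1 : w ζ * (ζ ^ p * deriv v ζ) ≤ 0 := by
      have h2 := hvneg ζ hζZ
      have h3 : (0:ℝ) < ζ ^ p := Real.rpow_pos_of_pos hζpos _
      have h4 := hwpos ζ hζpos.le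
      exact (mul_neg_of_pos_of_neg h4 (mul_neg_of_pos_of_neg h3 h2)).le
    have e2 : 0 ≤ v ζ * (Cw + ζ ^ p * deriv w ζ) := by
      apply mul_nonneg (hvpos ζ hζpos.le).le
      rw [hCwdef]; linarith
    have e4 : W ζ = v ζ * (ζ ^ p * deriv w ζ) - w ζ * (ζ ^ p * deriv v ζ) := rfl
    nlinarith [e1, e2, h1, e4]
  have htend : Filter.Tendsto (fun ζ : ℝ => v ζ * Cw) Filter.atTop (nhds 0) := by
    have := hvlim.mul_const Cw
    rwa [zero_mul] at this
  have : -W (Z+1) ≤ 0 :=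
    ge_of_tendsto htend ((Filter.eventually_ge_atTop (Z+1)).mono hbound)
  linarith

theorem stmt13 (m B : ℝ) (hm : 3 < m) (hB : 0 < B) :
    ∀ σ σ' : ℝ, 0 ≤ σ → 0 ≤ σ' →
      (∃ v : ℝ → ℝ, RegSol m B σ v ∧ (∀ ζ : ℝ, 0 ≤ ζ → 0 < v ζ) ∧
        Filter.Tendsto v Filter.atTop (nhds 0)) →
      (∃ v : ℝ → ℝ, RegSol m B σ' v ∧ (∀ ζ : ℝ, 0 ≤ ζ → 0 < v ζ) ∧
        Filter.Tendsto v Filter.atTop (nhds 0)) →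
      σ = σ' := by
  intro σ σ' _ _ hv hw
  obtain ⟨v, hv, hvpos, hvlim⟩ := hv
  obtain ⟨w, hw, hwpos, hwlim⟩ := hw
  by_contra hne
  rcases lt_or_gt_of_ne hne with h | h
  · exact (key hm hB h hv hw hvpos hwpos hvlim hwlim).elim
  · exact (key hm hB h hw hv hwpos hvpos hwlim hvlim).elim
end

section
/- For every σ > σ₀ there exists ζ ≥ 0 with v_σ(ζ) < 0; that is, the regular solution v_σ cannot be nonnegative on all of [0,∞). -/
open Filter Set

lemma regsol_d1 {m B σ : ℝ} {v : ℝ → ℝ} (h : RegSol m B σ v) {ζ : ℝ} (hζ : 0 < ζ) :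
    HasDerivAt v (deriv v ζ) ζ :=
  ((h.2.1.differentiableOn (by norm_num)) ζ hζ).differentiableAt
    (Ioi_mem_nhds hζ) |>.hasDerivAt

lemma regsol_d2 {m B σ : ℝ} {v : ℝ → ℝ} (h : RegSol m B σ v) {ζ : ℝ} (hζ : 0 < ζ) :
    HasDerivAt (deriv v) (deriv (deriv v) ζ) ζ := by
  have hd : ContDiffOn ℝ 1 (derivWithin v (Set.Ioi 0)) (Set.Ioi 0) :=
    h.2.1.derivWithin (uniqueDiffOn_Ioi 0) (by norm_num)
  have hd' : ContDiffOn ℝ 1 (deriv v) (Set.Ioi 0) :=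
    hd.congr (fun x hx => (derivWithin_of_isOpen isOpen_Ioi hx).symm)
  exact ((hd'.differentiableOn (by norm_num)) ζ hζ).differentiableAt
    (Ioi_mem_nhds hζ) |>.hasDerivAt

lemma wronskian_deriv {m B σ₀ σ : ℝ} (hm : 3 < m) {v₀ v : ℝ → ℝ}
    (h₀ : RegSol m B σ₀ v₀) (h : RegSol m B σ v) {ζ : ℝ} (hζ : 0 < ζ) :
    HasDerivAt (fun x => x ^ (1/(m-2)) * (deriv v₀ x * v x - v₀ x * deriv v x))
      ((σ - σ₀) * ζ ^ (1/(m-2) - 1) * (v₀ ζ * v ζ)) ζ := by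
  have hm2 : (0:ℝ) < m - 2 := by linarith
  have hp : HasDerivAt (fun x : ℝ => x ^ (1/(m-2))) ((1/(m-2)) * ζ ^ (1/(m-2)-1)) ζ :=
    Real.hasDerivAt_rpow_const (Or.inl hζ.ne')
  have hU : HasDerivAt (fun x => deriv v₀ x * v x - v₀ x * deriv v x)
      (deriv (deriv v₀) ζ * v ζ - v₀ ζ * deriv (deriv v) ζ) ζ := by
    have := ((regsol_d2 h₀ hζ).mul (regsol_d1 h hζ)).sub
      ((regsol_d1 h₀ hζ).mul (regsol_d2 h hζ))
    exact this.congr_deriv (by ring)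
  have key := hp.mul hU
  refine key.congr_deriv (Eq.symm ?_)
  have E0 := h₀.2.2.1 ζ hζ
  have E := h.2.2.1 ζ hζ
  have e1 : ζ ^ (1/(m-2)) = ζ ^ (1/(m-2)-1) * ζ := by
    have h2 := Real.rpow_add_one hζ.ne' (1/(m-2)-1)
    rw [sub_add_cancel] at h2
    exact h2
  rw [e1]
  linear_combination (ζ ^ (1/(m-2)-1) * v ζ) * E0 - (ζ ^ (1/(m-2)-1) * v₀ ζ) * E

theorem stmt14 (m B σ₀ : ℝ) (hm : 3 < m) (hB : 0 < B) (hσ₀ : 0 < σ₀)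
    (v₀ : ℝ → ℝ) (h₀ : RegSol m B σ₀ v₀)
    (hpos : ∀ ζ : ℝ, 0 ≤ ζ → 0 < v₀ ζ)
    (hdecay : Filter.Tendsto v₀ Filter.atTop (nhds 0)) :
    ∀ σ : ℝ, σ₀ < σ → ∀ v : ℝ → ℝ, RegSol m B σ v →
      ∃ ζ : ℝ, 0 ≤ ζ ∧ v ζ < 0 := by
  intro σ hσ v h
  by_contra hcon
  push_neg at hcon
  have hv : ∀ ζ : ℝ, 0 ≤ ζ → 0 ≤ v ζ := hcon
  have hm2 : (0:ℝ) < m - 2 := by linarith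
  have hα0 : 0 < 1/(m-2) := by positivity
  have hα1 : 1/(m-2) < 1 := by rw [div_lt_one hm2]; linarith
  set W : ℝ → ℝ := fun x => x ^ (1/(m-2)) * (deriv v₀ x * v x - v₀ x * deriv v x)
    with hWdef
  have hW' : ∀ ζ : ℝ, 0 < ζ →
      HasDerivAt W ((σ - σ₀) * ζ ^ (1/(m-2) - 1) * (v₀ ζ * v ζ)) ζ :=
    fun ζ hζ => wronskian_deriv hm h₀ h hζ
  -- monotonicity of W
  have Wmono : ∀ a b : ℝ, 0 < a → a ≤ b → W a ≤ W b := by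
    intro a b ha hab
    have hmo : MonotoneOn W (Ici a) := by
      apply monotoneOn_of_deriv_nonneg (convex_Ici a)
      · intro x hx
        exact (hW' x (lt_of_lt_of_le ha hx)).continuousAt.continuousWithinAt
      · intro x hx
        rw [interior_Ici] at hx
        exact ((hW' x (ha.trans hx)).differentiableAt).differentiableWithinAt
      · intro x hx
        rw [interior_Ici] at hx
        have hx0 : 0 < x := ha.trans hx
        rw [(hW' x hx0).deriv]
        have h1 : (0:ℝ) ≤ x ^ (1/(m-2)-1) := Real.rpow_nonneg hx0.le _
        have h2 : (0:ℝ) ≤ v₀ x * v x := mul_nonneg (hpos x hx0.le).le (hv x hx0.le)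
        have h3 : (0:ℝ) ≤ σ - σ₀ := by linarith
        positivity
    exact hmo self_mem_Ici (mem_Ici.2 hab) hab
  -- limit of W at 0+
  have hWlim : Tendsto W (nhdsWithin 0 (Ioi 0)) (nhds 0) := by
    set g : ℝ → ℝ := fun x =>
      derivWithin v₀ (Ici 0) x * v x - v₀ x * derivWithin v (Ici 0) x with hgdef
    have hg : ContinuousWithinAt g (Ici 0) 0 := by
      have c1 : ContinuousWithinAt (derivWithin v₀ (Ici 0)) (Ici 0) 0 :=
        (h₀.1.continuousOn_derivWithin (uniqueDiffOn_Ici 0) le_rfl) 0 self_mem_Ici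
      have c2 : ContinuousWithinAt (derivWithin v (Ici 0)) (Ici 0) 0 :=
        (h.1.continuousOn_derivWithin (uniqueDiffOn_Ici 0) le_rfl) 0 self_mem_Ici
      have c3 : ContinuousWithinAt v (Ici 0) 0 := h.1.continuousOn 0 self_mem_Ici
      have c4 : ContinuousWithinAt v₀ (Ici 0) 0 := h₀.1.continuousOn 0 self_mem_Ici
      exact (c1.mul c3).sub (c4.mul c2)
    have hpow : Tendsto (fun x : ℝ => x ^ (1/(m-2))) (nhdsWithin 0 (Ioi 0)) (nhds 0) := by
      have := (Real.continuousAt_rpow_const 0 (1/(m-2)) (Or.inr hα0.le)).tendsto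
      rw [Real.zero_rpow hα0.ne'] at this
      exact this.mono_left nhdsWithin_le_nhds
    have hgt : Tendsto g (nhdsWithin 0 (Ioi 0)) (nhds (g 0)) :=
      hg.tendsto.mono_left (nhdsWithin_mono 0 Ioi_subset_Ici_self)
    have hmul := hpow.mul hgt
    rw [zero_mul] at hmul
    refine hmul.congr' ?_
    filter_upwards [self_mem_nhdsWithin] with x hx
    have hx0 : (0:ℝ) < x := hx
    have e1 : derivWithin v₀ (Ici 0) x = deriv v₀ x :=
      derivWithin_of_mem_nhds (Ici_mem_nhds hx0)
    have e2 : derivWithin v (Ici 0) x = deriv v x :=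
      derivWithin_of_mem_nhds (Ici_mem_nhds hx0)
    simp only [hgdef, hWdef, e1, e2]
  -- v > 1/2 near 0
  have h1 : v 0 = 1 := h.2.2.2
  have hvc : ContinuousWithinAt v (Ici 0) 0 := h.1.continuousOn 0 self_mem_Ici
  have hev : ∀ᶠ x in nhdsWithin 0 (Ici 0), 1/2 < v x :=
    hvc.eventually (by rw [h1]; exact eventually_gt_nhds (by norm_num))
  obtain ⟨ε, hε, hball⟩ := Metric.mem_nhdsWithin_iff.1 hev
  set ε₁ : ℝ := ε/2 with hε₁def
  have hε₁ : 0 < ε₁ := by positivity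
  have hvhalf : ∀ x : ℝ, 0 ≤ x → x ≤ ε₁ → 1/2 < v x := by
    intro x hx0 hxε
    refine hball ⟨?_, hx0⟩
    rw [Metric.mem_ball, Real.dist_eq, sub_zero, abs_of_nonneg hx0]
    rw [hε₁def] at hxε; linarith
  -- W (ε₁/2) ≥ 0
  have hW0 : 0 ≤ W (ε₁/2) := by
    refine le_of_tendsto hWlim ?_
    filter_upwards [Ioc_mem_nhdsGT_of_mem (⟨le_refl 0, by positivity⟩ : (0:ℝ) ∈ Ico 0 (ε₁/2))]
      with a ha
    exact Wmono a (ε₁/2) ha.1 ha.2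
  -- strict increase on [ε₁/2, ε₁]
  have hδ : 0 < W ε₁ := by
    have hsm : StrictMonoOn W (Icc (ε₁/2) ε₁) := by
      apply strictMonoOn_of_deriv_pos (convex_Icc _ _)
      · intro x hx
        have hx0 : 0 < x := lt_of_lt_of_le (by positivity) hx.1
        exact (hW' x hx0).continuousAt.continuousWithinAt
      · intro x hx
        rw [interior_Icc] at hx
        have hx0 : 0 < x := lt_of_lt_of_le (by positivity) hx.1.le
        rw [(hW' x hx0).deriv]
        have h1 : (0:ℝ) < x ^ (1/(m-2)-1) := Real.rpow_pos_of_pos hx0 _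
        have h2 : (0:ℝ) < v₀ x := hpos x hx0.le
        have h3 : (0:ℝ) < v x := lt_trans (by norm_num) (hvhalf x hx0.le hx.2.le)
        have h4 : (0:ℝ) < σ - σ₀ := by linarith
        positivity
    have hlt : W (ε₁/2) < W ε₁ :=
      hsm ⟨le_refl _, by linarith⟩ ⟨by linarith, le_refl _⟩ (by linarith)
    linarith
  -- choose ζ₂ beyond which v₀ ≤ 1
  obtain ⟨N, hN⟩ := eventually_atTop.1
    (hdecay.eventually (eventually_lt_nhds (by norm_num : (0:ℝ) < 1)))
  set ζ₂ : ℝ := max N ε₁ with hζ₂def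
  have hζ₂pos : 0 < ζ₂ := lt_of_lt_of_le hε₁ (le_max_right _ _)
  have hWlb : ∀ ζ : ℝ, ζ₂ ≤ ζ → W ε₁ ≤ W ζ := fun ζ hζ =>
    Wmono ε₁ ζ hε₁ (le_trans (le_max_right N ε₁) hζ)
  set δ : ℝ := W ε₁ with hδdef
  set β : ℝ := 1 - 1/(m-2) with hβdef
  have hβ : 0 < β := by rw [hβdef]; linarith
  set F : ℝ → ℝ := fun x => v x / v₀ x + δ/β * x ^ β with hFdef
  have hF' : ∀ ζ : ℝ, ζ₂ ≤ ζ → ∃ d : ℝ, HasDerivAt F d ζ ∧ d ≤ 0 := by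
    intro ζ hζ
    have hζ0 : 0 < ζ := lt_of_lt_of_le hζ₂pos hζ
    have hv₀ : 0 < v₀ ζ := hpos ζ hζ0.le
    have hd1 : HasDerivAt (fun x => v x / v₀ x)
        ((deriv v ζ * v₀ ζ - v ζ * deriv v₀ ζ)/(v₀ ζ)^2) ζ :=
      (regsol_d1 h hζ0).div (regsol_d1 h₀ hζ0) hv₀.ne'
    have hd2 : HasDerivAt (fun x : ℝ => δ/β * x ^ β) (δ/β * (β * ζ ^ (β-1))) ζ :=
      (Real.hasDerivAt_rpow_const (Or.inl hζ0.ne')).const_mul _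
    refine ⟨_, hd1.add hd2, ?_⟩
    have hpow : (0:ℝ) < ζ ^ (1/(m-2)) := Real.rpow_pos_of_pos hζ0 _
    have hinv : (0:ℝ) < (ζ ^ (1/(m-2)))⁻¹ := by positivity
    have hUlb : δ * (ζ ^ (1/(m-2)))⁻¹ ≤ deriv v₀ ζ * v ζ - v₀ ζ * deriv v ζ := by
      have hWζ := hWlb ζ hζ
      rw [← div_eq_mul_inv, div_le_iff₀ hpow]
      calc δ ≤ W ζ := hWζ
        _ = (deriv v₀ ζ * v ζ - v₀ ζ * deriv v ζ) * ζ ^ (1/(m-2)) := by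
            rw [hWdef]; ring
    have hβ1 : ζ ^ (β - 1) = (ζ ^ (1/(m-2)))⁻¹ := by
      have e : β - 1 = -(1/(m-2)) := by rw [hβdef]; ring
      rw [e, Real.rpow_neg hζ0.le]
    have e2 : δ/β * (β * ζ ^ (β-1)) = δ * (ζ ^ (1/(m-2)))⁻¹ := by
      rw [hβ1]; field_simp
    rw [e2]
    have hv₀le : v₀ ζ ≤ 1 := (hN ζ (le_trans (le_max_left _ _) hζ)).le
    have hsqpos : (0:ℝ) < (v₀ ζ)^2 := by positivity
    have ht1 : (1:ℝ) ≤ ((v₀ ζ)^2)⁻¹ := by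
      rw [one_le_inv₀ hsqpos]
      nlinarith [hv₀.le]
    rw [div_eq_mul_inv]
    nlinarith [mul_nonneg (sub_nonneg.2 hUlb) (sub_nonneg.2 ht1),
      mul_pos hδ hinv, hUlb]
  -- F is antitone on [ζ₂, ∞)
  have hanti : AntitoneOn F (Ici ζ₂) := by
    apply antitoneOn_of_deriv_nonpos (convex_Ici _)
    · intro x hx
      obtain ⟨d, hd, _⟩ := hF' x hx
      exact hd.continuousAt.continuousWithinAt
    · intro x hx
      rw [interior_Ici] at hx
      obtain ⟨d, hd, _⟩ := hF' x hx.le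
      exact hd.differentiableAt.differentiableWithinAt
    · intro x hx
      rw [interior_Ici] at hx
      obtain ⟨d, hd, hdle⟩ := hF' x hx.le
      rw [hd.deriv]; exact hdle
  -- choose T large and derive a contradiction
  obtain ⟨T, hT1, hT2⟩ : ∃ T : ℝ, ζ₂ ≤ T ∧ β/δ * F ζ₂ < T ^ β := by
    have hev2 := ((tendsto_rpow_atTop hβ).eventually_gt_atTop (β/δ * F ζ₂)).and
      (eventually_ge_atTop ζ₂)
    obtain ⟨T, hT⟩ := hev2.exists
    exact ⟨T, hT.2, hT.1⟩
  have hFT : F T ≤ F ζ₂ := hanti self_mem_Ici (mem_Ici.2 hT1) hT1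
  have hgt : F ζ₂ < δ/β * T ^ β := by
    have h5 : δ/β * (β/δ * F ζ₂) = F ζ₂ := by field_simp
    calc F ζ₂ = δ/β * (β/δ * F ζ₂) := h5.symm
      _ < δ/β * T ^ β := mul_lt_mul_of_pos_left hT2 (by positivity)
  have hFTval : F T = v T / v₀ T + δ/β * T ^ β := rfl
  have hneg : v T / v₀ T < 0 := by
    rw [hFTval] at hFT; linarith
  have hT0 : (0:ℝ) ≤ T := le_trans hζ₂pos.le hT1
  have : (0:ℝ) ≤ v T / v₀ T := div_nonneg (hv T hT0) (hpos T hT0).le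
  linarith
end

section
/- If w : [0,∞) → ℝ is continuously differentiable on [0,∞), twice continuously differentiable on (0,∞), satisfies −ζ·w''(ζ) − w'(ζ)/(m−2) + b(ζ)·w(ζ) = σ₀·w(ζ) for all ζ > 0, and w(ζ) → 0 as ζ → +∞, then there exists λ ∈ ℝ such that w = λ·v_{σ₀}; that is, the eigenspace associated with σ₀ is one-dimensional. -/
open Filter Set

lemma const_of_deriv_zero_Ioi {f : ℝ → ℝ}
    (hf : ∀ x ∈ Set.Ioi (0:ℝ), HasDerivAt f 0 x) :
    ∀ x ∈ Set.Ioi (0:ℝ), ∀ y ∈ Set.Ioi (0:ℝ), f x = f y := by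
  intro x hx y hy
  refine (convex_Ioi (0:ℝ)).is_const_of_fderivWithin_eq_zero
    (fun z hz => (hf z hz).differentiableAt.differentiableWithinAt) ?_ hx hy
  intro z hz
  rw [fderivWithin_of_isOpen isOpen_Ioi hz, (hf z hz).hasFDerivAt.fderiv]
  ext; simp


theorem stmt16 (m B σ₀ : ℝ) (hm : 3 < m) (hB : 0 < B) (hσ₀ : 0 < σ₀)
    (v₀ : ℝ → ℝ) (h₀ : RegSol m B σ₀ v₀)
    (hpos : ∀ ζ : ℝ, 0 ≤ ζ → 0 < v₀ ζ)
    (hdecay : Filter.Tendsto v₀ Filter.atTop (nhds 0)) :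
    ∀ w : ℝ → ℝ,
      ContDiffOn ℝ 1 w (Set.Ici 0) →
      ContDiffOn ℝ 2 w (Set.Ioi 0) →
      (∀ ζ : ℝ, 0 < ζ →
        -ζ * deriv (deriv w) ζ - deriv w ζ / (m - 2)
          + B * ζ ^ (m / (m - 2)) * w ζ = σ₀ * w ζ) →
      Filter.Tendsto w Filter.atTop (nhds 0) →
      ∃ lam : ℝ, ∀ ζ : ℝ, 0 ≤ ζ → w ζ = lam * v₀ ζ := by
  intro w hw1 hw2 hwode _hwdecay
  obtain ⟨hv1, hv2, hvode, hv0⟩ := h₀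
  have hm2 : (0:ℝ) < m - 2 := by linarith
  set p : ℝ := 1 / (m - 2) with hp
  have hppos : 0 < p := by positivity
  -- differentiability of deriv on Ioi 0
  have key : ∀ (f : ℝ → ℝ), ContDiffOn ℝ 2 f (Set.Ioi 0) →
      (∀ ζ ∈ Set.Ioi (0:ℝ), HasDerivAt f (deriv f ζ) ζ) ∧
      (∀ ζ ∈ Set.Ioi (0:ℝ), HasDerivAt (deriv f) (deriv (deriv f) ζ) ζ) := by
    intro f hf
    have h2 : ContDiffOn ℝ ((1:ℕ) + 1) f (Set.Ioi 0) := by norm_num; exact hf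
    rw [contDiffOn_succ_iff_deriv_of_isOpen isOpen_Ioi] at h2
    refine ⟨fun ζ hζ => ?_, fun ζ hζ => ?_⟩
    · exact (h2.1.differentiableAt (isOpen_Ioi.mem_nhds hζ)).hasDerivAt
    · exact ((h2.2.2.differentiableOn (by simp)).differentiableAt
        (isOpen_Ioi.mem_nhds hζ)).hasDerivAt
  obtain ⟨hdw, hddw⟩ := key w hw2
  obtain ⟨hdv, hddv⟩ := key v₀ hv2
  -- Wronskian
  set W : ℝ → ℝ := fun ζ => w ζ * deriv v₀ ζ - deriv w ζ * v₀ ζ with hW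
  have hWd : ∀ ζ ∈ Set.Ioi (0:ℝ),
      HasDerivAt W (w ζ * deriv (deriv v₀) ζ - deriv (deriv w) ζ * v₀ ζ) ζ := by
    intro ζ hζ
    have := ((hdw ζ hζ).mul (hddv ζ hζ)).sub ((hddw ζ hζ).mul (hdv ζ hζ))
    refine this.congr_deriv (Eq.symm ?_)
    ring
  have hWode : ∀ ζ ∈ Set.Ioi (0:ℝ),
      ζ * (w ζ * deriv (deriv v₀) ζ - deriv (deriv w) ζ * v₀ ζ) = -W ζ / (m - 2) := by
    intro ζ hζ
    have h1 := hvode ζ hζ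
    have h2 := hwode ζ hζ
    simp only [hW]
    linear_combination (-(w ζ)) * h1 + (v₀ ζ) * h2
  -- g = ζ^p * W has zero derivative on Ioi 0
  set g : ℝ → ℝ := fun ζ => ζ ^ p * W ζ with hg
  have hgd : ∀ ζ ∈ Set.Ioi (0:ℝ), HasDerivAt g 0 ζ := by
    intro ζ hζ
    have hζ0 : (0:ℝ) < ζ := hζ
    have hrw : HasDerivAt (fun x : ℝ => x ^ p) (p * ζ ^ (p - 1)) ζ :=
      Real.hasDerivAt_rpow_const (Or.inl hζ0.ne')
    have h := hrw.mul (hWd ζ hζ)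
    refine h.congr_deriv (Eq.symm ?_)
    have hW' : ζ * (w ζ * deriv (deriv v₀) ζ - deriv (deriv w) ζ * v₀ ζ)
        = -W ζ / (m - 2) := hWode ζ hζ
    have hsplit : ζ ^ p = ζ ^ (p - 1) * ζ := by
      rw [← Real.rpow_add_one hζ0.ne']; ring_nf
    rw [hsplit]
    have : ζ ^ (p - 1) * ζ * (w ζ * deriv (deriv v₀) ζ - deriv (deriv w) ζ * v₀ ζ)
        = ζ ^ (p - 1) * (-W ζ / (m - 2)) := by
      rw [mul_assoc, hW']
    rw [this, hp]
    field_simp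
    ring
  -- g is constant on Ioi 0
  have hgconst := const_of_deriv_zero_Ioi hgd
  -- W extends continuously to 0: use derivWithin on Ici 0
  have hWcont : Filter.Tendsto W (nhdsWithin 0 (Set.Ioi 0))
      (nhds (w 0 * derivWithin v₀ (Set.Ici 0) 0 - derivWithin w (Set.Ici 0) 0 * v₀ 0)) := by
    have hcw : ContinuousOn (derivWithin w (Set.Ici 0)) (Set.Ici 0) :=
      hw1.continuousOn_derivWithin (uniqueDiffOn_Ici 0) le_rfl
    have hcv : ContinuousOn (derivWithin v₀ (Set.Ici 0)) (Set.Ici 0) :=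
      hv1.continuousOn_derivWithin (uniqueDiffOn_Ici 0) le_rfl
    have h0 : (0:ℝ) ∈ Set.Ici (0:ℝ) := Set.self_mem_Ici
    have t1 : Filter.Tendsto (fun ζ => w ζ * derivWithin v₀ (Set.Ici 0) ζ
        - derivWithin w (Set.Ici 0) ζ * v₀ ζ) (nhdsWithin 0 (Set.Ici 0))
        (nhds (w 0 * derivWithin v₀ (Set.Ici 0) 0 - derivWithin w (Set.Ici 0) 0 * v₀ 0)) :=
      (((hw1.continuousOn 0 h0).mul (hcv 0 h0)).sub
        ((hcw 0 h0).mul (hv1.continuousOn 0 h0)))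
    have t2 := t1.mono_left (nhdsWithin_mono 0 Set.Ioi_subset_Ici_self)
    refine t2.congr' ?_
    filter_upwards [self_mem_nhdsWithin] with ζ hζ
    have e1 : derivWithin v₀ (Set.Ici 0) ζ = deriv v₀ ζ :=
      derivWithin_of_mem_nhds (Ici_mem_nhds hζ)
    have e2 : derivWithin w (Set.Ici 0) ζ = deriv w ζ :=
      derivWithin_of_mem_nhds (Ici_mem_nhds hζ)
    simp [hW, e1, e2]
  -- ζ^p → 0 as ζ → 0+
  have hrtend : Filter.Tendsto (fun ζ : ℝ => ζ ^ p) (nhdsWithin 0 (Set.Ioi 0)) (nhds 0) := by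
    have h := (Real.continuousAt_rpow_const 0 p (Or.inr hppos.le)).continuousWithinAt
      (s := Set.Ioi (0:ℝ))
    simpa [ContinuousWithinAt, Real.zero_rpow hppos.ne'] using h
  have hgtend : Filter.Tendsto g (nhdsWithin 0 (Set.Ioi 0)) (nhds 0) := by
    have := hrtend.mul hWcont
    rwa [zero_mul] at this
  -- g is eventually the constant g 1, hence g 1 = 0
  have hg1 : g 1 = 0 := by
    have hone : (1:ℝ) ∈ Set.Ioi (0:ℝ) := by norm_num
    have hconsttend : Filter.Tendsto g (nhdsWithin 0 (Set.Ioi 0)) (nhds (g 1)) := by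
      refine Filter.Tendsto.congr' ?_ tendsto_const_nhds
      filter_upwards [self_mem_nhdsWithin] with ζ hζ
      exact (hgconst 1 hone ζ hζ)
    exact tendsto_nhds_unique hconsttend hgtend
  -- hence W = 0 on Ioi 0
  have hWzero : ∀ ζ ∈ Set.Ioi (0:ℝ), W ζ = 0 := by
    intro ζ hζ
    have hζ0 : (0:ℝ) < ζ := hζ
    have : g ζ = 0 := by
      rw [hgconst ζ hζ 1 (by norm_num), hg1]
    have hne : ζ ^ p ≠ 0 := (Real.rpow_pos_of_pos hζ0 p).ne'
    have : ζ ^ p * W ζ = 0 := this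
    exact (mul_eq_zero.mp this).resolve_left hne
  -- ratio h = w / v₀ is constant
  set r : ℝ → ℝ := fun ζ => w ζ / v₀ ζ with hr
  have hrd : ∀ ζ ∈ Set.Ioi (0:ℝ), HasDerivAt r 0 ζ := by
    intro ζ hζ
    have hζ0 : (0:ℝ) < ζ := hζ
    have hvne : v₀ ζ ≠ 0 := (hpos ζ hζ0.le).ne'
    have h := (hdw ζ hζ).div (hdv ζ hζ) hvne
    refine h.congr_deriv (Eq.symm ?_)
    have := hWzero ζ hζ
    simp only [hW] at this
    rw [eq_comm, div_eq_zero_iff]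
    left; linarith
  have hrconst := const_of_deriv_zero_Ioi hrd
  -- continuity of r at 0
  have hr0 : r 1 = w 0 := by
    have hvne0 : v₀ 0 ≠ 0 := (hpos 0 le_rfl).ne'
    have hc : Filter.Tendsto r (nhdsWithin 0 (Set.Ioi 0)) (nhds (w 0 / v₀ 0)) := by
      have h0 : (0:ℝ) ∈ Set.Ici (0:ℝ) := Set.self_mem_Ici
      have := ((hw1.continuousOn 0 h0).div (hv1.continuousOn 0 h0) hvne0)
      exact this.mono_left (nhdsWithin_mono 0 Set.Ioi_subset_Ici_self)
    have hc2 : Filter.Tendsto r (nhdsWithin 0 (Set.Ioi 0)) (nhds (r 1)) := by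
      refine Filter.Tendsto.congr' ?_ tendsto_const_nhds
      filter_upwards [self_mem_nhdsWithin] with ζ hζ
      exact hrconst 1 (by norm_num) ζ hζ
    have := tendsto_nhds_unique hc2 hc
    rw [this, hv0, div_one]
  refine ⟨w 0, fun ζ hζ => ?_⟩
  rcases eq_or_lt_of_le hζ with h | h
  · rw [← h, hv0, mul_one]
  · have hvne : v₀ ζ ≠ 0 := (hpos ζ hζ).ne'
    have : r ζ = w 0 := by rw [hrconst ζ h 1 (by norm_num), hr0]
    have : w ζ / v₀ ζ = w 0 := this
    field_simp at this
    linarith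
end

section
/- There is no function w : [0,∞) → ℝ that is continuously differentiable on [0,∞), twice continuously differentiable on (0,∞), tends to 0 at +∞, and satisfies −ζ·w''(ζ) − w'(ζ)/(m−2) + (b(ζ) − σ₀)·w(ζ) = v_{σ₀}(ζ) for all ζ > 0; that is, the eigenvalue σ₀ has algebraic multiplicity one. -/
open Filter Set

lemma aux_derivs {f : ℝ → ℝ} (hf : ContDiffOn ℝ 2 f (Set.Ioi 0))
    {ζ : ℝ} (hζ : 0 < ζ) :
    HasDerivAt f (deriv f ζ) ζ ∧ HasDerivAt (deriv f) (deriv (deriv f) ζ) ζ := by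
  have h1 : DifferentiableOn ℝ f (Set.Ioi 0) := hf.differentiableOn (by norm_num)
  have h2 : ContDiffOn ℝ 1 (deriv f) (Set.Ioi 0) :=
    hf.deriv_of_isOpen isOpen_Ioi (by norm_num)
  have h3 : DifferentiableOn ℝ (deriv f) (Set.Ioi 0) := h2.differentiableOn one_ne_zero
  exact ⟨(h1.differentiableAt (isOpen_Ioi.mem_nhds hζ)).hasDerivAt,
    (h3.differentiableAt (isOpen_Ioi.mem_nhds hζ)).hasDerivAt⟩

lemma min_principle (Z : ℝ) (g g' g'' : ℝ → ℝ)
    (hd : ∀ ζ, Z < ζ → HasDerivAt g (g' ζ) ζ)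
    (hdd : ∀ ζ, Z < ζ → HasDerivAt g' (g'' ζ) ζ)
    (hc : ContinuousOn g (Set.Ici Z))
    (hcrit : ∀ ζ, Z < ζ → g ζ < 0 → g' ζ = 0 → g'' ζ < 0)
    (h0 : 0 ≤ g Z) (hlim : Tendsto g atTop (nhds 0)) :
    ∀ ζ, Z ≤ ζ → 0 ≤ g ζ := by
  by_contra hcon
  push_neg at hcon
  obtain ⟨ζ₀, hζ₀Z, hζ₀⟩ := hcon
  have hev : ∀ᶠ t in atTop, g ζ₀ < g t := hlim.eventually (eventually_gt_nhds hζ₀)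
  obtain ⟨T, hT⟩ := Filter.eventually_atTop.mp hev
  set T' := max T ζ₀ with hT'
  have hZT' : Z ≤ T' := le_trans hζ₀Z (le_max_right _ _)
  obtain ⟨ζs, hζsmem, hmin⟩ := isCompact_Icc.exists_isMinOn (Set.nonempty_Icc.mpr hZT')
    (hc.mono Set.Icc_subset_Ici_self)
  have hζ₀mem : ζ₀ ∈ Set.Icc Z T' := ⟨hζ₀Z, le_max_right _ _⟩
  have hle0 : g ζs ≤ g ζ₀ := hmin hζ₀mem
  have hminI : IsMinOn g (Set.Ici Z) ζs := by
    rw [isMinOn_iff]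
    intro t ht
    by_cases h : t ≤ T'
    · exact hmin ⟨ht, h⟩
    · push_neg at h
      have : g ζ₀ < g t := hT t (le_trans (le_max_left _ _) h.le)
      linarith
  have hζsZ : Z < ζs := by
    rcases lt_or_eq_of_le hζsmem.1 with h | h
    · exact h
    · exfalso; rw [h] at h0; linarith
  have hloc : IsLocalMin g ζs := hminI.isLocalMin
    (Filter.mem_of_superset (isOpen_Ioi.mem_nhds hζsZ) Set.Ioi_subset_Ici_self)
  have hg'0 : g' ζs = 0 := by
    have := hloc.deriv_eq_zero
    rw [(hd ζs hζsZ).deriv] at this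
    exact this
  have hgneg : g ζs < 0 := lt_of_le_of_lt hle0 hζ₀
  have hg'' : g'' ζs < 0 := hcrit ζs hζsZ hgneg hg'0
  have hslope : Tendsto (slope g' ζs) (nhdsWithin ζs {ζs}ᶜ) (nhds (g'' ζs)) :=
    hasDerivAt_iff_tendsto_slope.mp (hdd ζs hζsZ)
  have hev2 : ∀ᶠ t in nhdsWithin ζs (Set.Ioi ζs), slope g' ζs t < 0 := by
    have := hslope.eventually (eventually_lt_nhds hg'')
    exact this.filter_mono (nhdsWithin_mono _ (fun t ht => Set.mem_compl_singleton_iff.mpr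
      (ne_of_gt ht)))
  obtain ⟨u, hu, hsub⟩ := mem_nhdsGT_iff_exists_Ioc_subset.mp hev2
  have hg'neg : ∀ t ∈ Set.Ioc ζs u, g' t < 0 := by
    intro t ht
    have hs := hsub ht
    simp only [Set.mem_setOf_eq, slope_def_field] at hs
    have h1 : (g' t - g' ζs) / (t - ζs) < 0 := hs
    rw [hg'0, sub_zero] at h1
    have h2 : 0 < t - ζs := by simp at ht ⊢; linarith [ht.1]
    rcases div_neg_iff.mp h1 with ⟨_, h3⟩ | ⟨h3, _⟩
    · linarith
    · exact h3
  have hanti : StrictAntiOn g (Set.Icc ζs u) := by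
    apply strictAntiOn_of_deriv_neg (convex_Icc _ _)
    · intro t ht
      have : Z < t := lt_of_lt_of_le hζsZ ht.1
      exact ((hd t this).differentiableAt).continuousAt.continuousWithinAt
    · intro t ht
      rw [interior_Icc] at ht
      have hZt : Z < t := lt_of_lt_of_le hζsZ ht.1.le
      rw [(hd t hZt).deriv]
      exact hg'neg t ⟨ht.1, ht.2.le⟩
  have huI : ζs < u := hu
  have h5 : g u < g ζs := hanti ⟨le_refl _, huI.le⟩ ⟨huI.le, le_refl _⟩ huI
  have h6 : g ζs ≤ g u := hminI (Set.mem_Ici.mpr (le_trans hζsZ.le huI.le))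
  linarith

set_option maxHeartbeats 1600000 in
theorem stmt17 (m B σ₀ : ℝ) (hm : 3 < m) (hB : 0 < B) (hσ₀ : 0 < σ₀)
    (v₀ : ℝ → ℝ) (h₀ : RegSol m B σ₀ v₀)
    (hpos : ∀ ζ : ℝ, 0 ≤ ζ → 0 < v₀ ζ)
    (hdecay : Filter.Tendsto v₀ Filter.atTop (nhds 0)) :
    ¬ ∃ w : ℝ → ℝ,
      ContDiffOn ℝ 1 w (Set.Ici 0) ∧
      ContDiffOn ℝ 2 w (Set.Ioi 0) ∧
      (∀ ζ : ℝ, 0 < ζ →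
        -ζ * deriv (deriv w) ζ - deriv w ζ / (m - 2)
          + (B * ζ ^ (m / (m - 2)) - σ₀) * w ζ = v₀ ζ) ∧
      Filter.Tendsto w Filter.atTop (nhds 0) := by
  rintro ⟨w, hw1, hw2, hweq, hwlim⟩
  obtain ⟨hv1, hv2, hveq, hv0⟩ := h₀
  have hm2pos : (0:ℝ) < m - 2 := by linarith
  have hm2ne : m - 2 ≠ 0 := ne_of_gt hm2pos
  have hapos : (0:ℝ) < (m-2)⁻¹ := by positivity
  -- convenient derivative facts
  have hvd : ∀ {ζ:ℝ}, 0 < ζ →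
      HasDerivAt v₀ (deriv v₀ ζ) ζ ∧ HasDerivAt (deriv v₀) (deriv (deriv v₀) ζ) ζ :=
    fun h => aux_derivs hv2 h
  have hwd : ∀ {ζ:ℝ}, 0 < ζ →
      HasDerivAt w (deriv w ζ) ζ ∧ HasDerivAt (deriv w) (deriv (deriv w) ζ) ζ :=
    fun h => aux_derivs hw2 h
  -- rearranged ODEs
  have Ev : ∀ ζ, 0 < ζ → ζ * deriv (deriv v₀) ζ
      = -(deriv v₀ ζ) * (m-2)⁻¹ + (B * ζ ^ (m/(m-2)) - σ₀) * v₀ ζ := by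
    intro ζ hζ
    linear_combination (-1 : ℝ) * hveq ζ hζ
  have Ew : ∀ ζ, 0 < ζ → ζ * deriv (deriv w) ζ
      = -(deriv w ζ) * (m-2)⁻¹ + (B * ζ ^ (m/(m-2)) - σ₀) * w ζ - v₀ ζ := by
    intro ζ hζ
    linear_combination (-1 : ℝ) * hweq ζ hζ
  have hXq : ∀ ζ:ℝ, 0 < ζ → ζ ^ (m/(m-2)) = ζ^((m-2)⁻¹) * ζ^((m-2)⁻¹) * ζ := by
    intro ζ hζ
    rw [show m/(m-2) = (m-2)⁻¹ + ((m-2)⁻¹ + 1) from by field_simp; ring]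
    rw [Real.rpow_add hζ, Real.rpow_add hζ, Real.rpow_one, mul_assoc]
  -- the weighted Wronskian
  set W : ℝ → ℝ := fun ζ => ζ ^ ((m-2)⁻¹) * (v₀ ζ * deriv w ζ - w ζ * deriv v₀ ζ) with hWdef
  have hWd : ∀ ζ, 0 < ζ → HasDerivAt W (-(ζ ^ ((m-2)⁻¹ - 1)) * (v₀ ζ)^2) ζ := by
    intro ζ hζ
    have h1 : HasDerivAt (fun x : ℝ => x ^ ((m-2)⁻¹)) ((m-2)⁻¹ * ζ ^ ((m-2)⁻¹ - 1)) ζ :=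
      Real.hasDerivAt_rpow_const (Or.inl hζ.ne')
    have h2 : HasDerivAt (fun x => v₀ x * deriv w x - w x * deriv v₀ x)
        ((deriv v₀ ζ * deriv w ζ + v₀ ζ * deriv (deriv w) ζ)
          - (deriv w ζ * deriv v₀ ζ + w ζ * deriv (deriv v₀) ζ)) ζ :=
      ((hvd hζ).1.mul (hwd hζ).2).sub ((hwd hζ).1.mul (hvd hζ).2)
    have h3 := h1.mul h2
    refine h3.congr_deriv (Eq.symm ?_)
    have hζa : ζ ^ ((m-2)⁻¹) = ζ ^ ((m-2)⁻¹ - 1) * ζ := by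
      rw [Real.rpow_sub_one hζ.ne']; field_simp
    rw [hζa]
    linear_combination (-(ζ ^ ((m-2)⁻¹ - 1) * v₀ ζ)) * Ew ζ hζ
      + (ζ ^ ((m-2)⁻¹ - 1) * w ζ) * Ev ζ hζ
  have hWanti : StrictAntiOn W (Set.Ioi 0) := by
    apply strictAntiOn_of_deriv_neg (convex_Ioi 0)
    · intro t ht
      exact (hWd t ht).differentiableAt.continuousAt.continuousWithinAt
    · intro t ht
      rw [interior_Ioi] at ht
      rw [(hWd t ht).deriv]
      have h1 : (0:ℝ) < t ^ ((m-2)⁻¹ - 1) := Real.rpow_pos_of_pos ht _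
      linarith only [mul_pos h1 (mul_pos (hpos t ht.le) (hpos t ht.le))]
  -- limit of W at 0⁺
  have hW0 : Tendsto W (nhdsWithin 0 (Set.Ioi 0)) (nhds 0) := by
    have hconth : ContinuousOn (fun ζ => v₀ ζ * derivWithin w (Set.Ici 0) ζ
        - w ζ * derivWithin v₀ (Set.Ici 0) ζ) (Set.Ici 0) := by
      apply ContinuousOn.sub
      · exact hv1.continuousOn.mul (hw1.continuousOn_derivWithin (uniqueDiffOn_Ici 0) le_rfl)
      · exact hw1.continuousOn.mul (hv1.continuousOn_derivWithin (uniqueDiffOn_Ici 0) le_rfl)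
    have htend1 := ((hconth 0 Set.self_mem_Ici).mono_left
      (nhdsWithin_mono 0 Set.Ioi_subset_Ici_self))
    have htend2 : Tendsto (fun ζ:ℝ => ζ ^ ((m-2)⁻¹)) (nhdsWithin 0 (Set.Ioi 0)) (nhds 0) := by
      have hc : ContinuousAt (fun ζ:ℝ => ζ ^ ((m-2)⁻¹)) 0 :=
        Real.continuousAt_rpow_const 0 _ (Or.inr hapos.le)
      have := hc.continuousWithinAt (s := Set.Ioi 0)
      rw [ContinuousWithinAt, Real.zero_rpow (ne_of_gt hapos)] at this
      exact this
    have hmul := htend2.mul htend1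
    rw [zero_mul] at hmul
    apply hmul.congr'
    filter_upwards [self_mem_nhdsWithin] with ζ hζ
    have hζ' : (0:ℝ) < ζ := hζ
    rw [derivWithin_of_mem_nhds (Ici_mem_nhds hζ'), derivWithin_of_mem_nhds (Ici_mem_nhds hζ')]
  have hWneg : ∀ ζ, 0 < ζ → W ζ < 0 := by
    intro ζ hζ
    have hhalf : (0:ℝ) < ζ/2 := by linarith
    have h2 : W (ζ/2) ≤ 0 := by
      apply ge_of_tendsto hW0
      filter_upwards [Ioo_mem_nhdsGT_of_mem (Set.mem_Ico.mpr ⟨le_refl 0, hhalf⟩)] with t ht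
      exact le_of_lt (hWanti ht.1 hhalf (ht.2))
    have h3 : W ζ < W (ζ/2) := hWanti hhalf hζ (by linarith)
    linarith
  set δ : ℝ := -W 1 with hδdef
  clear_value δ
  have hδpos : 0 < δ := by
    have := hWneg 1 one_pos
    simp only [hδdef]; linarith
  have hWle : ∀ t, 1 ≤ t → W t ≤ -δ := by
    intro t ht
    rcases eq_or_lt_of_le ht with h | h
    · rw [← h]; simp [hδdef]
    · have := hWanti (Set.mem_Ioi.mpr one_pos) (Set.mem_Ioi.mpr (by linarith)) h
      simp only [hδdef]; linarith
  -- ============ barrier machinery ============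
  set p : ℝ := 1 + (m-2)⁻¹ with hp
  clear_value p
  have hppos : 0 < p := by rw [hp]; positivity
  have hpne : p ≠ 0 := ne_of_gt hppos
  have hφd : ∀ (c : ℝ) (ζ : ℝ), 0 < ζ → HasDerivAt (fun x => Real.exp (-(c * x ^ p)))
      (-(c * p * ζ ^ ((m-2)⁻¹)) * Real.exp (-(c * ζ ^ p))) ζ := by
    intro c ζ hζ
    have h1 : HasDerivAt (fun x : ℝ => x ^ p) (p * ζ ^ (p - 1)) ζ :=
      Real.hasDerivAt_rpow_const (Or.inl hζ.ne')
    have h2 : HasDerivAt (fun x : ℝ => -(c * x ^ p)) (-(c * (p * ζ ^ (p-1)))) ζ :=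
      (h1.const_mul c).neg
    have h3 := h2.exp
    convert h3 using 1
    rw [show p - 1 = (m-2)⁻¹ from by rw [hp]; ring]
    ring
  have hφdd : ∀ (c : ℝ) (ζ : ℝ), 0 < ζ → HasDerivAt
      (fun x => -(c * p * x ^ ((m-2)⁻¹)) * Real.exp (-(c * x ^ p)))
      ((-(c * p * (m-2)⁻¹ * ζ ^ ((m-2)⁻¹ - 1))
        + (c * p * ζ ^ ((m-2)⁻¹)) * (c * p * ζ ^ ((m-2)⁻¹))) * Real.exp (-(c * ζ ^ p))) ζ := by
    intro c ζ hζ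
    have h1 : HasDerivAt (fun x : ℝ => -(c * p * x ^ ((m-2)⁻¹)))
        (-(c * p * ((m-2)⁻¹ * ζ ^ ((m-2)⁻¹ - 1)))) ζ :=
      ((Real.hasDerivAt_rpow_const (Or.inl hζ.ne')).const_mul (c*p)).neg
    have h2 := h1.mul (hφd c ζ hζ)
    refine h2.congr_deriv (Eq.symm ?_)
    ring
  have hLexp : ∀ (c : ℝ) (ζ : ℝ), 0 < ζ →
      ζ * ((-(c * p * (m-2)⁻¹ * ζ ^ ((m-2)⁻¹ - 1))
        + (c * p * ζ ^ ((m-2)⁻¹)) * (c * p * ζ ^ ((m-2)⁻¹))) * Real.exp (-(c * ζ ^ p)))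
      + (-(c * p * ζ ^ ((m-2)⁻¹)) * Real.exp (-(c * ζ ^ p))) * (m - 2)⁻¹
      - (B * ζ ^ (m/(m-2)) - σ₀) * Real.exp (-(c * ζ ^ p))
      = Real.exp (-(c * ζ ^ p)) * ((c^2*p^2 - B) * ζ ^ (m/(m-2))
          - 2*(m-2)⁻¹*c*p*ζ^((m-2)⁻¹) + σ₀) := by
    intro c ζ hζ
    have h1 : ζ ^ ((m-2)⁻¹ - 1) * ζ = ζ ^ ((m-2)⁻¹) := by
      rw [Real.rpow_sub_one hζ.ne']; field_simp
    have h2 := hXq ζ hζ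
    linear_combination (Real.exp (-(c * ζ ^ p)) * (-(c * p * (m-2)⁻¹))) * h1
      + (-(Real.exp (-(c * ζ ^ p)) * (c^2*p^2))) * h2
  -- constants
  set sqB : ℝ := Real.sqrt B with hsqB
  clear_value sqB
  have hsqBpos : 0 < sqB := by rw [hsqB]; exact Real.sqrt_pos.mpr hB
  have hsqBsq : sqB^2 = B := by rw [hsqB]; exact Real.sq_sqrt hB.le
  set μ : ℝ := (9/10) * sqB / p with hμ
  clear_value μ
  set lam : ℝ := (11/10) * sqB / p with hlam
  clear_value lam
  have hμpos : 0 < μ := by rw [hμ]; positivity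
  have hlampos : 0 < lam := by rw [hlam]; positivity
  have hμp : μ * p = (9/10) * sqB := by rw [hμ]; field_simp
  have hlamp : lam * p = (11/10) * sqB := by rw [hlam]; field_simp
  -- the region
  set Z₀ : ℝ := max 1 (max ((σ₀+1)/((19/100)*B)) ((2*(m-2)⁻¹*((11/10)*sqB))/((21/100)*B)))
    with hZ₀def
  clear_value Z₀
  have hZ₀1 : (1:ℝ) ≤ Z₀ := by rw [hZ₀def]; exact le_max_left _ _
  have hZ₀pos : (0:ℝ) < Z₀ := lt_of_lt_of_le one_pos hZ₀1
  have hreg1 : ∀ ζ, Z₀ ≤ ζ → σ₀ + 1 ≤ (19/100)*B*ζ^(m/(m-2)) := by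
    intro ζ hz
    have h1 : (1:ℝ) ≤ ζ := le_trans hZ₀1 hz
    have hzpos : (0:ℝ) < ζ := by linarith
    have h2 : ζ ≤ ζ^(m/(m-2)) := by
      nth_rewrite 1 [← Real.rpow_one ζ]
      apply Real.rpow_le_rpow_of_exponent_le h1
      rw [le_div_iff₀ hm2pos]; linarith
    have hz' := hz
    rw [hZ₀def] at hz'
    have h3 : (σ₀+1)/((19/100)*B) ≤ ζ :=
      le_trans (le_trans (le_max_left _ _) (le_max_right 1 _)) hz'
    rw [div_le_iff₀ (by positivity)] at h3
    linarith only [h3, mul_le_mul_of_nonneg_left h2 (show (0:ℝ) ≤ (19/100)*B by positivity)]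
  have hreg2 : ∀ ζ, Z₀ ≤ ζ → 2*(m-2)⁻¹*lam*p*ζ^((m-2)⁻¹) ≤ (21/100)*B*ζ^(m/(m-2)) := by
    intro ζ hz
    have h1 : (1:ℝ) ≤ ζ := le_trans hZ₀1 hz
    have hzpos : (0:ℝ) < ζ := by linarith
    have hA1 : (1:ℝ) ≤ ζ^((m-2)⁻¹) := Real.one_le_rpow h1 hapos.le
    have hq := hXq ζ hzpos
    have hz' := hz
    rw [hZ₀def] at hz'
    have h3 : (2*(m-2)⁻¹*((11/10)*sqB))/((21/100)*B) ≤ ζ :=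
      le_trans (le_trans (le_max_right _ _) (le_max_right 1 _)) hz'
    rw [div_le_iff₀ (by positivity)] at h3
    rw [hq, show 2*(m-2)⁻¹*lam*p = 2*(m-2)⁻¹*((11/10)*sqB) from by rw [← hlamp]; ring]
    linarith only [mul_le_mul_of_nonneg_left h3 (show (0:ℝ) ≤ ζ^((m-2)⁻¹) by positivity),
      mul_le_mul_of_nonneg_left hA1 (show (0:ℝ) ≤ (21/100)*B*ζ*ζ^((m-2)⁻¹) by positivity)]
  have hreg3 : ∀ ζ, Z₀ ≤ ζ → 1 ≤ B*ζ^(m/(m-2)) - σ₀ := by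
    intro ζ hz
    have hzpos : (0:ℝ) < ζ := lt_of_lt_of_le hZ₀pos hz
    have hQ : (0:ℝ) < ζ^(m/(m-2)) := Real.rpow_pos_of_pos hzpos _
    linarith only [hreg1 ζ hz, mul_pos hB hQ]
  -- barrier differential inequalities
  have hLμle : ∀ ζ, Z₀ ≤ ζ →
      ζ * ((-(μ * p * (m-2)⁻¹ * ζ ^ ((m-2)⁻¹ - 1))
        + (μ * p * ζ ^ ((m-2)⁻¹)) * (μ * p * ζ ^ ((m-2)⁻¹))) * Real.exp (-(μ * ζ ^ p)))
      + (-(μ * p * ζ ^ ((m-2)⁻¹)) * Real.exp (-(μ * ζ ^ p))) * (m - 2)⁻¹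
      - (B * ζ ^ (m/(m-2)) - σ₀) * Real.exp (-(μ * ζ ^ p))
      ≤ -Real.exp (-(μ * ζ ^ p)) := by
    intro ζ hz
    have hzpos : (0:ℝ) < ζ := lt_of_lt_of_le hZ₀pos hz
    rw [hLexp μ ζ hzpos]
    have hE : (0:ℝ) < Real.exp (-(μ * ζ ^ p)) := Real.exp_pos _
    have hμsq : μ^2*p^2 = (81/100)*B := by
      have h2 : (μ*p)^2 = ((9/10)*sqB)^2 := by rw [hμp]
      linarith only [h2, hsqBsq]
    have hμsqQ : μ^2*p^2*ζ^(m/(m-2)) = (81/100)*B*ζ^(m/(m-2)) := by rw [hμsq]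
    have hinner : (μ^2*p^2 - B) * ζ^(m/(m-2)) - 2*(m-2)⁻¹*μ*p*ζ^((m-2)⁻¹) + σ₀ ≤ -1 := by
      have h4 : (0:ℝ) ≤ 2*(m-2)⁻¹*μ*p*ζ^((m-2)⁻¹) := by positivity
      linarith only [hreg1 ζ hz, hμsqQ, h4]
    linarith only [mul_le_mul_of_nonneg_left hinner hE.le]
  have hLlamge : ∀ ζ, Z₀ ≤ ζ →
      0 ≤ ζ * ((-(lam * p * (m-2)⁻¹ * ζ ^ ((m-2)⁻¹ - 1))
        + (lam * p * ζ ^ ((m-2)⁻¹)) * (lam * p * ζ ^ ((m-2)⁻¹))) * Real.exp (-(lam * ζ ^ p)))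
      + (-(lam * p * ζ ^ ((m-2)⁻¹)) * Real.exp (-(lam * ζ ^ p))) * (m - 2)⁻¹
      - (B * ζ ^ (m/(m-2)) - σ₀) * Real.exp (-(lam * ζ ^ p)) := by
    intro ζ hz
    have hzpos : (0:ℝ) < ζ := lt_of_lt_of_le hZ₀pos hz
    rw [hLexp lam ζ hzpos]
    have hE : (0:ℝ) < Real.exp (-(lam * ζ ^ p)) := Real.exp_pos _
    have hlamsq : lam^2*p^2 = (121/100)*B := by
      have h2 : (lam*p)^2 = ((11/10)*sqB)^2 := by rw [hlamp]
      linarith only [h2, hsqBsq]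
    have hlamsqQ : lam^2*p^2*ζ^(m/(m-2)) = (121/100)*B*ζ^(m/(m-2)) := by rw [hlamsq]
    have hinner : 0 ≤ (lam^2*p^2 - B) * ζ^(m/(m-2)) - 2*(m-2)⁻¹*lam*p*ζ^((m-2)⁻¹) + σ₀ := by
      linarith only [hreg2 ζ hz, hlamsqQ, hσ₀]
    linarith only [mul_nonneg hE.le hinner]
  -- limits and continuity of barriers
  have hφlim : ∀ c : ℝ, 0 < c → Tendsto (fun ζ:ℝ => Real.exp (-(c * ζ ^ p))) atTop (nhds 0) := by
    intro c hc
    have h1 : Tendsto (fun ζ:ℝ => ζ ^ p) atTop atTop := tendsto_rpow_atTop hppos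
    have h2 : Tendsto (fun ζ:ℝ => c * ζ ^ p) atTop atTop := h1.const_mul_atTop hc
    have h3 : Tendsto (fun ζ:ℝ => -(c * ζ ^ p)) atTop atBot := tendsto_neg_atTop_atBot.comp h2
    exact Real.tendsto_exp_atBot.comp h3
  have hφcont : ∀ c : ℝ, ContinuousOn (fun x => Real.exp (-(c * x ^ p))) (Set.Ici Z₀) :=
    fun c t ht =>
      ((hφd c t (lt_of_lt_of_le hZ₀pos ht)).differentiableAt).continuousAt.continuousWithinAt
  have hvcont : ContinuousOn v₀ (Set.Ici Z₀) :=
    hv1.continuousOn.mono (fun t ht => le_trans hZ₀pos.le ht)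
  have hwcont : ContinuousOn w (Set.Ici Z₀) :=
    hw1.continuousOn.mono (fun t ht => le_trans hZ₀pos.le ht)
-- ============ instance (i): upper bound for v₀ ============
  set K₁ : ℝ := v₀ Z₀ / Real.exp (-(μ * Z₀ ^ p)) with hK₁
  clear_value K₁
  have hK₁pos : 0 < K₁ := by rw [hK₁]; exact div_pos (hpos Z₀ hZ₀pos.le) (Real.exp_pos _)
  have hvup : ∀ ζ, Z₀ ≤ ζ → v₀ ζ ≤ K₁ * Real.exp (-(μ * ζ ^ p)) := by
    have H := min_principle Z₀ (fun x => K₁ * Real.exp (-(μ * x ^ p)) - v₀ x)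
      (fun x => K₁ * (-(μ * p * x ^ ((m-2)⁻¹)) * Real.exp (-(μ * x ^ p))) - deriv v₀ x)
      (fun x => K₁ * ((-(μ * p * (m-2)⁻¹ * x ^ ((m-2)⁻¹ - 1))
        + (μ * p * x ^ ((m-2)⁻¹)) * (μ * p * x ^ ((m-2)⁻¹))) * Real.exp (-(μ * x ^ p)))
        - deriv (deriv v₀) x)
      ?_ ?_ ?_ ?_ ?_ ?_
    · intro ζ hz; have h5 := H ζ hz; linarith
    · intro ζ hζ
      have hzpos : 0 < ζ := lt_trans hZ₀pos hζ
      exact ((hφd μ ζ hzpos).const_mul K₁).sub (hvd hzpos).1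
    · intro ζ hζ
      have hzpos : 0 < ζ := lt_trans hZ₀pos hζ
      exact ((hφdd μ ζ hzpos).const_mul K₁).sub (hvd hzpos).2
    · exact (continuousOn_const.mul (hφcont μ)).sub hvcont
    · intro ζ hζ hneg h'0
      have hzpos : 0 < ζ := lt_trans hZ₀pos hζ
      have hz : Z₀ ≤ ζ := hζ.le
      have hE : (0:ℝ) < Real.exp (-(μ * ζ ^ p)) := Real.exp_pos _
      have hL := hLμle ζ hz
      have hEv := Ev ζ hzpos
      have hbσ := hreg3 ζ hz
      have hprod : 0 < (B*ζ^(m/(m-2)) - σ₀) * (v₀ ζ - K₁ * Real.exp (-(μ*ζ^p))) :=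
        mul_pos (by linarith) (by linarith)
      have hLK := mul_le_mul_of_nonneg_left hL hK₁pos.le
      have hKE : 0 < K₁ * Real.exp (-(μ * ζ ^ p)) := mul_pos hK₁pos hE
      have h'0m : (K₁ * (-(μ * p * ζ ^ ((m-2)⁻¹)) * Real.exp (-(μ * ζ ^ p)))
          - deriv v₀ ζ) * (m-2)⁻¹ = 0 := by rw [h'0, zero_mul]
      have hmain : ζ * (K₁ * ((-(μ * p * (m-2)⁻¹ * ζ ^ ((m-2)⁻¹ - 1))
          + (μ * p * ζ ^ ((m-2)⁻¹)) * (μ * p * ζ ^ ((m-2)⁻¹))) * Real.exp (-(μ * ζ ^ p)))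
          - deriv (deriv v₀) ζ) < 0 := by
        linarith only [hEv, hprod, hLK, hKE, h'0m]
      by_contra hcon
      push_neg at hcon
      linarith only [hmain, mul_nonneg hzpos.le hcon]
    · rw [hK₁, div_mul_cancel₀ _ (Real.exp_pos _).ne']
      simp
    · have h5 := ((hφlim μ hμpos).const_mul K₁).sub hdecay
      simpa using h5
  -- ============ instances (ii),(iii): bounds for w ============
  set K₂ : ℝ := K₁ + |w Z₀| / Real.exp (-(μ * Z₀ ^ p)) with hK₂
  clear_value K₂
  have hK₂K₁ : K₁ ≤ K₂ := by
    rw [hK₂]; have : (0:ℝ) ≤ |w Z₀| / Real.exp (-(μ * Z₀ ^ p)) := by positivity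
    linarith
  have hK₂pos : 0 < K₂ := lt_of_lt_of_le hK₁pos hK₂K₁
  have habs : |w Z₀| / Real.exp (-(μ * Z₀ ^ p)) * Real.exp (-(μ * Z₀ ^ p)) = |w Z₀| :=
    div_mul_cancel₀ _ (Real.exp_pos _).ne'
  have hwup : ∀ ζ, Z₀ ≤ ζ → w ζ ≤ K₂ * Real.exp (-(μ * ζ ^ p)) := by
    have H := min_principle Z₀ (fun x => K₂ * Real.exp (-(μ * x ^ p)) - w x)
      (fun x => K₂ * (-(μ * p * x ^ ((m-2)⁻¹)) * Real.exp (-(μ * x ^ p))) - deriv w x)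
      (fun x => K₂ * ((-(μ * p * (m-2)⁻¹ * x ^ ((m-2)⁻¹ - 1))
        + (μ * p * x ^ ((m-2)⁻¹)) * (μ * p * x ^ ((m-2)⁻¹))) * Real.exp (-(μ * x ^ p)))
        - deriv (deriv w) x)
      ?_ ?_ ?_ ?_ ?_ ?_
    · intro ζ hz; have h5 := H ζ hz; linarith
    · intro ζ hζ
      have hzpos : 0 < ζ := lt_trans hZ₀pos hζ
      exact ((hφd μ ζ hzpos).const_mul K₂).sub (hwd hzpos).1
    · intro ζ hζ
      have hzpos : 0 < ζ := lt_trans hZ₀pos hζ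
      exact ((hφdd μ ζ hzpos).const_mul K₂).sub (hwd hzpos).2
    · exact (continuousOn_const.mul (hφcont μ)).sub hwcont
    · intro ζ hζ hneg h'0
      have hzpos : 0 < ζ := lt_trans hZ₀pos hζ
      have hz : Z₀ ≤ ζ := hζ.le
      have hE : (0:ℝ) < Real.exp (-(μ * ζ ^ p)) := Real.exp_pos _
      have hL := hLμle ζ hz
      have hEw := Ew ζ hzpos
      have hbσ := hreg3 ζ hz
      have hvu := hvup ζ hz
      have hprod : 0 < (B*ζ^(m/(m-2)) - σ₀) * (w ζ - K₂ * Real.exp (-(μ*ζ^p))) :=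
        mul_pos (by linarith) (by linarith)
      have hLK := mul_le_mul_of_nonneg_left hL hK₂pos.le
      have hK21E : 0 ≤ (K₂ - K₁) * Real.exp (-(μ*ζ^p)) :=
        mul_nonneg (by linarith) hE.le
      have hmain : ζ * (K₂ * ((-(μ * p * (m-2)⁻¹ * ζ ^ ((m-2)⁻¹ - 1))
          + (μ * p * ζ ^ ((m-2)⁻¹)) * (μ * p * ζ ^ ((m-2)⁻¹))) * Real.exp (-(μ * ζ ^ p)))
          - deriv (deriv w) ζ) < 0 := by
        have hKE : 0 < K₂ * Real.exp (-(μ * ζ ^ p)) := mul_pos hK₂pos hE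
        have h'0m : (K₂ * (-(μ * p * ζ ^ ((m-2)⁻¹)) * Real.exp (-(μ * ζ ^ p)))
            - deriv w ζ) * (m-2)⁻¹ = 0 := by rw [h'0, zero_mul]
        linarith only [hEw, hprod, hLK, hK21E, hKE, h'0m, hvu]
      by_contra hcon
      push_neg at hcon
      linarith only [hmain, mul_nonneg hzpos.le hcon]
    · rw [hK₂]
      linarith only [le_abs_self (w Z₀), habs,
        mul_pos hK₁pos (Real.exp_pos (-(μ * Z₀ ^ p)))]
    · have h5 := ((hφlim μ hμpos).const_mul K₂).sub hwlim
      simpa using h5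
  have hwlo : ∀ ζ, Z₀ ≤ ζ → -(K₂ * Real.exp (-(μ * ζ ^ p))) ≤ w ζ := by
    have H := min_principle Z₀ (fun x => K₂ * Real.exp (-(μ * x ^ p)) + w x)
      (fun x => K₂ * (-(μ * p * x ^ ((m-2)⁻¹)) * Real.exp (-(μ * x ^ p))) + deriv w x)
      (fun x => K₂ * ((-(μ * p * (m-2)⁻¹ * x ^ ((m-2)⁻¹ - 1))
        + (μ * p * x ^ ((m-2)⁻¹)) * (μ * p * x ^ ((m-2)⁻¹))) * Real.exp (-(μ * x ^ p)))
        + deriv (deriv w) x)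
      ?_ ?_ ?_ ?_ ?_ ?_
    · intro ζ hz; have h5 := H ζ hz; linarith
    · intro ζ hζ
      have hzpos : 0 < ζ := lt_trans hZ₀pos hζ
      exact ((hφd μ ζ hzpos).const_mul K₂).add (hwd hzpos).1
    · intro ζ hζ
      have hzpos : 0 < ζ := lt_trans hZ₀pos hζ
      exact ((hφdd μ ζ hzpos).const_mul K₂).add (hwd hzpos).2
    · exact (continuousOn_const.mul (hφcont μ)).add hwcont
    · intro ζ hζ hneg h'0
      have hzpos : 0 < ζ := lt_trans hZ₀pos hζ
      have hz : Z₀ ≤ ζ := hζ.le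
      have hE : (0:ℝ) < Real.exp (-(μ * ζ ^ p)) := Real.exp_pos _
      have hL := hLμle ζ hz
      have hEw := Ew ζ hzpos
      have hbσ := hreg3 ζ hz
      have hvpos := hpos ζ hzpos.le
      have hprod : 0 < (B*ζ^(m/(m-2)) - σ₀) * (-(K₂ * Real.exp (-(μ*ζ^p))) - w ζ) :=
        mul_pos (by linarith) (by linarith)
      have hLK := mul_le_mul_of_nonneg_left hL hK₂pos.le
      have hmain : ζ * (K₂ * ((-(μ * p * (m-2)⁻¹ * ζ ^ ((m-2)⁻¹ - 1))
          + (μ * p * ζ ^ ((m-2)⁻¹)) * (μ * p * ζ ^ ((m-2)⁻¹))) * Real.exp (-(μ * ζ ^ p)))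
          + deriv (deriv w) ζ) < 0 := by
        have hKE : 0 < K₂ * Real.exp (-(μ * ζ ^ p)) := mul_pos hK₂pos hE
        have h'0m : (K₂ * (-(μ * p * ζ ^ ((m-2)⁻¹)) * Real.exp (-(μ * ζ ^ p)))
            + deriv w ζ) * (m-2)⁻¹ = 0 := by rw [h'0, zero_mul]
        linarith only [hEw, hprod, hLK, hvpos, hKE, h'0m]
      by_contra hcon
      push_neg at hcon
      linarith only [hmain, mul_nonneg hzpos.le hcon]
    · rw [hK₂]
      linarith only [neg_abs_le (w Z₀), habs,
        mul_pos hK₁pos (Real.exp_pos (-(μ * Z₀ ^ p)))]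
    · have h5 := ((hφlim μ hμpos).const_mul K₂).add hwlim
      simpa using h5
-- ============ instance (iv): lower bound for v₀ ============
  set ε : ℝ := v₀ Z₀ / Real.exp (-(lam * Z₀ ^ p)) with hε
  clear_value ε
  have hεpos : 0 < ε := by rw [hε]; exact div_pos (hpos Z₀ hZ₀pos.le) (Real.exp_pos _)
  have hvlo : ∀ ζ, Z₀ ≤ ζ → ε * Real.exp (-(lam * ζ ^ p)) ≤ v₀ ζ := by
    have H := min_principle Z₀ (fun x => v₀ x - ε * Real.exp (-(lam * x ^ p)))
      (fun x => deriv v₀ x - ε * (-(lam * p * x ^ ((m-2)⁻¹)) * Real.exp (-(lam * x ^ p))))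
      (fun x => deriv (deriv v₀) x - ε * ((-(lam * p * (m-2)⁻¹ * x ^ ((m-2)⁻¹ - 1))
        + (lam * p * x ^ ((m-2)⁻¹)) * (lam * p * x ^ ((m-2)⁻¹))) * Real.exp (-(lam * x ^ p))))
      ?_ ?_ ?_ ?_ ?_ ?_
    · intro ζ hz; have h5 := H ζ hz; linarith
    · intro ζ hζ
      have hzpos : 0 < ζ := lt_trans hZ₀pos hζ
      exact (hvd hzpos).1.sub ((hφd lam ζ hzpos).const_mul ε)
    · intro ζ hζ
      have hzpos : 0 < ζ := lt_trans hZ₀pos hζ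
      exact (hvd hzpos).2.sub ((hφdd lam ζ hzpos).const_mul ε)
    · exact hvcont.sub (continuousOn_const.mul (hφcont lam))
    · intro ζ hζ hneg h'0
      have hzpos : 0 < ζ := lt_trans hZ₀pos hζ
      have hz : Z₀ ≤ ζ := hζ.le
      have hE : (0:ℝ) < Real.exp (-(lam * ζ ^ p)) := Real.exp_pos _
      have hL := hLlamge ζ hz
      have hEv := Ev ζ hzpos
      have hbσ := hreg3 ζ hz
      have hprod : 0 < (B*ζ^(m/(m-2)) - σ₀) * (ε * Real.exp (-(lam*ζ^p)) - v₀ ζ) :=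
        mul_pos (by linarith) (by linarith)
      have hLε := mul_le_mul_of_nonneg_left hL hεpos.le
      have hmain : ζ * (deriv (deriv v₀) ζ - ε * ((-(lam * p * (m-2)⁻¹ * ζ ^ ((m-2)⁻¹ - 1))
          + (lam * p * ζ ^ ((m-2)⁻¹)) * (lam * p * ζ ^ ((m-2)⁻¹)))
            * Real.exp (-(lam * ζ ^ p)))) < 0 := by
        have hKE : 0 < ε * Real.exp (-(lam * ζ ^ p)) := mul_pos hεpos hE
        have h'0m : (deriv v₀ ζ - ε * (-(lam * p * ζ ^ ((m-2)⁻¹))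
            * Real.exp (-(lam * ζ ^ p)))) * (m-2)⁻¹ = 0 := by rw [h'0, zero_mul]
        linarith only [hEv, hprod, hLε, hKE, h'0m]
      by_contra hcon
      push_neg at hcon
      linarith only [hmain, mul_nonneg hzpos.le hcon]
    · rw [hε, div_mul_cancel₀ _ (Real.exp_pos _).ne']
      simp
    · have h5 := hdecay.sub ((hφlim lam hlampos).const_mul ε)
      simpa using h5
  -- ============ final contradiction ============
  set c0 : ℝ := δ / (2*μ*p*K₁^2) with hc0
  clear_value c0
  have hc0pos : 0 < c0 := by rw [hc0]; positivity
  have hc0K : c0 * (2*μ*p) * K₁^2 = δ := by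
    rw [hc0]; field_simp
  have hGd : ∀ t:ℝ, 0 < t →
      HasDerivAt (fun x:ℝ => c0 * (x ^ (-(2*(m-2)⁻¹)) * Real.exp (2*μ*x^p)))
      (c0 * ((-(2*(m-2)⁻¹)) * t ^ (-(2*(m-2)⁻¹)-1) * Real.exp (2*μ*t^p)
        + t ^ (-(2*(m-2)⁻¹)) * (Real.exp (2*μ*t^p) * (2*μ*p*t^((m-2)⁻¹))))) t := by
    intro t ht
    have h1 : HasDerivAt (fun x:ℝ => x ^ (-(2*(m-2)⁻¹)))
        ((-(2*(m-2)⁻¹)) * t ^ (-(2*(m-2)⁻¹)-1)) t := Real.hasDerivAt_rpow_const (Or.inl ht.ne')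
    have h2 : HasDerivAt (fun x:ℝ => 2*μ*x^p) (2*μ*(p * t^(p-1))) t :=
      (Real.hasDerivAt_rpow_const (Or.inl ht.ne')).const_mul (2*μ)
    have h3 := h2.exp
    have h4 := (h1.mul h3).const_mul c0
    refine h4.congr_deriv (Eq.symm ?_)
    rw [show p - 1 = (m-2)⁻¹ from by rw [hp]; ring]
    ring
  have hrd : ∀ t:ℝ, 0 < t → HasDerivAt (fun x => w x / v₀ x)
      ((deriv w t * v₀ t - w t * deriv v₀ t)/(v₀ t)^2) t :=
    fun t ht => (hwd ht).1.div (hvd ht).1 (hpos t ht.le).ne'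
  have hmono : AntitoneOn (fun x => w x / v₀ x
      + c0 * (x ^ (-(2*(m-2)⁻¹)) * Real.exp (2*μ*x^p))) (Set.Ici Z₀) := by
    apply antitoneOn_of_deriv_nonpos (convex_Ici _)
    · intro t ht
      have htpos : 0 < t := lt_of_lt_of_le hZ₀pos ht
      exact ((hrd t htpos).add (hGd t htpos)).differentiableAt.continuousAt.continuousWithinAt
    · intro t ht
      rw [interior_Ici] at ht
      have htpos : 0 < t := lt_trans hZ₀pos ht
      exact ((hrd t htpos).add (hGd t htpos)).differentiableAt.differentiableWithinAt
    · intro t ht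
      rw [interior_Ici] at ht
      have htZ : Z₀ < t := ht
      have htpos : 0 < t := lt_trans hZ₀pos htZ
      have ht1 : (1:ℝ) ≤ t := le_trans hZ₀1 htZ.le
      rw [show deriv (fun x => w x / v₀ x + c0 * (x ^ (-(2*(m-2)⁻¹)) * Real.exp (2*μ*x^p))) t = _ from ((hrd t htpos).add (hGd t htpos)).deriv]
      have hv := hpos t htpos.le
      have hWt := hWle t ht1
      simp only [hWdef] at hWt
      have hA : (0:ℝ) < t ^ ((m-2)⁻¹) := Real.rpow_pos_of_pos htpos _
      have hAm : (0:ℝ) < t ^ (-(m-2)⁻¹) := Real.rpow_pos_of_pos htpos _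
      have hAAN : t^(-(m-2)⁻¹) * (t^((m-2)⁻¹) * (v₀ t * deriv w t - w t * deriv v₀ t))
          = v₀ t * deriv w t - w t * deriv v₀ t := by
        rw [← mul_assoc, ← Real.rpow_add htpos,
          show -(m-2)⁻¹ + (m-2)⁻¹ = 0 from by ring, Real.rpow_zero, one_mul]
      have hNa : deriv w t * v₀ t - w t * deriv v₀ t ≤ -δ * t^(-(m-2)⁻¹) := by
        linarith only [mul_le_mul_of_nonneg_left hWt hAm.le, hAAN]
      have h6 : (v₀ t)^2 ≤ K₁^2 * (Real.exp (-(μ*t^p)))^2 := by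
        have hfac2 : 0 ≤ (K₁ * Real.exp (-(μ*t^p)) - v₀ t) * (K₁ * Real.exp (-(μ*t^p)) + v₀ t) :=
          mul_nonneg (by linarith only [hvup t htZ.le])
            (by linarith only [hvup t htZ.le, hv])
        linarith only [hfac2]
      have hEE : (Real.exp (-(μ*t^p)))^2 * Real.exp (2*μ*t^p) = 1 := by
        rw [sq, ← Real.exp_add, ← Real.exp_add,
          show -(μ*t^p) + -(μ*t^p) + 2*μ*t^p = 0 from by ring, Real.exp_zero]
      have hEEK : K₁^2 * ((Real.exp (-(μ*t^p)))^2 * Real.exp (2*μ*t^p)) = K₁^2 := by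
        rw [hEE, mul_one]
      have hX : Real.exp (2*μ*t^p) * (v₀ t)^2 ≤ K₁^2 := by
        linarith only [mul_le_mul_of_nonneg_left h6 (Real.exp_pos (2*μ*t^p)).le, hEEK]
      have hc2μp : (0:ℝ) ≤ c0*(2*μ*p) := by
        have h8 := mul_pos hc0pos (mul_pos (mul_pos two_pos hμpos) hppos)
        linarith only [h8]
      have h5 : c0*(2*μ*p) * (Real.exp (2*μ*t^p) * (v₀ t)^2) ≤ δ := by
        linarith only [mul_le_mul_of_nonneg_left hX hc2μp, hc0K]
      have h3 : (deriv w t * v₀ t - w t * deriv v₀ t)/(v₀ t)^2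
          ≤ -(c0*(2*μ*p) * t^(-(m-2)⁻¹) * Real.exp (2*μ*t^p)) := by
        rw [div_le_iff₀ (by positivity)]
        linarith only [hNa, mul_le_mul_of_nonneg_left h5 hAm.le]
      have hR2' : c0*(2*μ*p) * Real.exp (2*μ*t^p) * (t^((m-2)⁻¹) * t^(-(2*(m-2)⁻¹)))
          = c0*(2*μ*p) * Real.exp (2*μ*t^p) * t^(-(m-2)⁻¹) := by
        rw [← Real.rpow_add htpos,
          show (m-2)⁻¹ + -(2*(m-2)⁻¹) = -(m-2)⁻¹ from by ring]
      have hnegterm : c0 * ((-(2*(m-2)⁻¹)) * t ^ (-(2*(m-2)⁻¹)-1) * Real.exp (2*μ*t^p)) ≤ 0 := by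
        have h7 : (0:ℝ) < t ^ (-(2*(m-2)⁻¹)-1) := Real.rpow_pos_of_pos htpos _
        have h8 : (0:ℝ) < (m-2)⁻¹ * (c0 * (t ^ (-(2*(m-2)⁻¹)-1) * Real.exp (2*μ*t^p))) :=
          mul_pos hapos (mul_pos hc0pos (mul_pos h7 (Real.exp_pos _)))
        linarith only [h8]
      linarith only [h3, hnegterm, hR2']
  set C₀ : ℝ := w Z₀ / v₀ Z₀ + c0 * (Z₀ ^ (-(2*(m-2)⁻¹)) * Real.exp (2*μ*Z₀^p)) with hC₀
  clear_value C₀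
  have hrG : ∀ t, Z₀ ≤ t →
      w t / v₀ t + c0 * (t ^ (-(2*(m-2)⁻¹)) * Real.exp (2*μ*t^p)) ≤ C₀ := by
    intro t htt
    have h9 := hmono Set.self_mem_Ici htt htt
    simp only at h9
    rw [hC₀]
    exact h9
  have hTT : ∀ κ c1 : ℝ, 0 < κ → 0 < c1 →
      Tendsto (fun ζ:ℝ => c1 * (ζ ^ (-(2*(m-2)⁻¹)) * Real.exp (κ * ζ^p))) atTop atTop := by
    intro κ c1 hκ hc1
    have hs : Tendsto (fun u:ℝ => c1 * (Real.exp (κ*u) / u ^ (2*(m-2)⁻¹/p))) atTop atTop :=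
      (tendsto_exp_mul_div_rpow_atTop (2*(m-2)⁻¹/p) κ hκ).const_mul_atTop hc1
    have hcomp := hs.comp (tendsto_rpow_atTop hppos)
    apply hcomp.congr'
    filter_upwards [eventually_gt_atTop 0] with x hx
    simp only [Function.comp]
    rw [← Real.rpow_mul hx.le, show p*(2*(m-2)⁻¹/p) = 2*(m-2)⁻¹ from by field_simp,
      Real.rpow_neg hx.le]
    field_simp
  have hGtop : Tendsto (fun x:ℝ => c0 * (x ^ (-(2*(m-2)⁻¹)) * Real.exp (2*μ*x^p)))
      atTop atTop := hTT (2*μ) c0 (by positivity) hc0pos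
  have hT2 : Tendsto (fun x:ℝ => ε*c0 * (x ^ (-(2*(m-2)⁻¹)) * Real.exp ((2*μ - lam) * x^p)))
      atTop atTop := by
    have hdiff : 2*μ - lam = (7/10)*sqB/p := by rw [hμ, hlam]; ring
    exact hTT (2*μ - lam) (ε*c0) (by rw [hdiff]; positivity) (by positivity)
  have hev : ∀ᶠ x:ℝ in atTop, C₀ ≤ c0 * (x ^ (-(2*(m-2)⁻¹)) * Real.exp (2*μ*x^p))
      ∧ K₂ + ε*|C₀| < ε*c0 * (x ^ (-(2*(m-2)⁻¹)) * Real.exp ((2*μ - lam) * x^p))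
      ∧ Z₀ ≤ x := by
    filter_upwards [hGtop.eventually_ge_atTop C₀,
      hT2.eventually_gt_atTop (K₂ + ε*|C₀|), eventually_ge_atTop Z₀] with x h1 h2 h3
    exact ⟨h1, h2, h3⟩
  obtain ⟨x, hx1, hx2, hx3⟩ := hev.exists
  have hxpos : 0 < x := lt_of_lt_of_le hZ₀pos hx3
  have hvx := hpos x hxpos.le
  have hrx := hrG x hx3
  have hdiv : w x / v₀ x ≤ C₀ - c0 * (x ^ (-(2*(m-2)⁻¹)) * Real.exp (2*μ*x^p)) := by linarith
  have hwxeq : w x = (w x / v₀ x) * v₀ x := (div_mul_cancel₀ _ hvx.ne').symm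
  have h1 : w x ≤ (C₀ - c0 * (x ^ (-(2*(m-2)⁻¹)) * Real.exp (2*μ*x^p))) * v₀ x := by
    rw [hwxeq]; exact mul_le_mul_of_nonneg_right hdiv hvx.le
  have hfac : C₀ - c0 * (x ^ (-(2*(m-2)⁻¹)) * Real.exp (2*μ*x^p)) ≤ 0 := by linarith
  have h2' : (C₀ - c0 * (x ^ (-(2*(m-2)⁻¹)) * Real.exp (2*μ*x^p))) * v₀ x
      ≤ (C₀ - c0 * (x ^ (-(2*(m-2)⁻¹)) * Real.exp (2*μ*x^p)))
        * (ε * Real.exp (-(lam * x ^ p))) :=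
    mul_le_mul_of_nonpos_left (hvlo x hx3) hfac
  have hGE : c0 * (x ^ (-(2*(m-2)⁻¹)) * Real.exp (2*μ*x^p)) * (ε * Real.exp (-(lam * x ^ p)))
      = ε*c0 * (x ^ (-(2*(m-2)⁻¹)) * Real.exp ((2*μ - lam) * x^p)) := by
    rw [show (2*μ - lam) * x^p = 2*μ*x^p + -(lam * x^p) from by ring, Real.exp_add]
    ring
  have hxp0 : (0:ℝ) ≤ x^p := (Real.rpow_pos_of_pos hxpos p).le
  have hEl1 : Real.exp (-(lam * x ^ p)) ≤ 1 := by
    rw [Real.exp_le_one_iff]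
    linarith only [mul_nonneg hlampos.le hxp0]
  have hEm1 : Real.exp (-(μ * x ^ p)) ≤ 1 := by
    rw [Real.exp_le_one_iff]
    linarith only [mul_nonneg hμpos.le hxp0]
  have h3' : w x ≤ C₀ * (ε * Real.exp (-(lam * x ^ p)))
      - ε*c0 * (x ^ (-(2*(m-2)⁻¹)) * Real.exp ((2*μ - lam) * x^p)) := by
    linarith only [h1, h2', hGE]
  have hC₀b : C₀ * (ε * Real.exp (-(lam * x ^ p))) ≤ ε * |C₀| := by
    linarith only [mul_nonneg (mul_nonneg hεpos.le (Real.exp_pos (-(lam * x ^ p))).le)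
        (sub_nonneg.mpr (le_abs_self C₀)),
      mul_nonneg (mul_nonneg (abs_nonneg C₀) hεpos.le) (sub_nonneg.mpr hEl1)]
  have hlow : -(K₂ * Real.exp (-(μ * x ^ p))) ≤ w x := hwlo x hx3
  have hK₂E : K₂ * Real.exp (-(μ * x ^ p)) ≤ K₂ := by
    linarith only [mul_nonneg hK₂pos.le (sub_nonneg.mpr hEm1)]
  linarith only [h3', hC₀b, hlow, hK₂E, hx2]
end
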